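/- arXiv:2311.17803 — 2 statements merged into one kernel-verified Lean document; each statement's English description precedes it below -/
import Mathlib

section
/- For the component Q^{+-}(m,n,t), let p : Q_v -> Z/2Z be the group homomorphism with p(beta_i) = 1 for all i, and let Q^+(pi) denote the set of nonnegative-integer combinations of alpha_1, alpha_2, alpha_3. Then the even part of the intersection of Q^+_u over all u in Sp(v) equals Q^+(pi), and the odd part of this intersection equals delta + Q^+(pi). -/
open scoped ComplexOrder

attribute [local instance] Classical.propDecidable

namespace KMS

noncomputable section

variable (X : Type*) [Fintype X] (H : Type*) [AddCommGroup H] [Module ℂ H]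

/-- A root datum: maps `a : X → h`, `b : X → h*`, parity `p`, with `a`, `b`
linearly independent families (the "injectivity" of the induced maps from the span of `X`). -/
structure RootDatum where
  a : X → H
  b : X → Module.Dual ℂ H
  p : X → ZMod 2
  lin_indep_a : LinearIndependent ℂ a
  lin_indep_b : LinearIndependent ℂ b

variable {X H}

/-- The Cartan matrix entry `a^v_{xy} = ⟨a_v(x), b_v(y)⟩`. -/
def cartan (v : RootDatum X H) (x y : X) : ℂ := v.b y (v.a x)

/-- `x` is reflectable at `v`. -/
def Reflectable (v : RootDatum X H) (x : X) : Prop :=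
  (cartan v x x = 0 ∧ v.p x = 1) ∨
  (cartan v x x ≠ 0 ∧ v.p x = 0 ∧
    ∀ y, y ≠ x → ∃ n : ℕ, 2 * cartan v x y / cartan v x x = -(n : ℂ)) ∨
  (cartan v x x ≠ 0 ∧ v.p x = 1 ∧
    ∀ y, y ≠ x → ∃ n : ℕ, cartan v x y / cartan v x x = -(n : ℂ))

/-- The anisotropic reflexion `r_x : v → v'`. -/
def IsAnisoReflexion (x : X) (v v' : RootDatum X H) : Prop :=
  Reflectable v x ∧ cartan v x x ≠ 0 ∧ v'.p = v.p ∧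
  (∀ y, v'.a y = v.a y - (2 * cartan v y x / cartan v x x) • v.a x) ∧
  (∀ y, v'.b y = v.b y - (2 * cartan v x y / cartan v x x) • v.b x)

/-- The isotropic reflexion `r_x : v → v'`. -/
def IsIsoReflexion (x : X) (v v' : RootDatum X H) : Prop :=
  Reflectable v x ∧ cartan v x x = 0 ∧
  v'.a x = -v.a x ∧ v'.b x = -v.b x ∧ v'.p x = v.p x ∧
  ∀ y, y ≠ x →
    (cartan v x y = 0 → v'.a y = v.a y ∧ v'.b y = v.b y ∧ v'.p y = v.p y) ∧
    (cartan v x y ≠ 0 →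
      v'.a y = v.a y + (cartan v y x / cartan v x y) • v.a x ∧
      v'.b y = v.b y + v.b x ∧ v'.p y = v.p y + 1)

/-- A reflexion is either anisotropic or isotropic. -/
def IsReflexion (x : X) (v v' : RootDatum X H) : Prop :=
  IsAnisoReflexion x v v' ∨ IsIsoReflexion x v v'

/-- A path of reflexions from `v` to `u`, recorded by the ordered list of its marks. -/
inductive IsPath : RootDatum X H → List X → RootDatum X H → Prop
  | nil (v : RootDatum X H) : IsPath v [] v
  | cons {v v' u : RootDatum X H} {x : X} {ms : List X} :
      IsReflexion x v v' → IsPath v' ms u → IsPath v (x :: ms) u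

/-- A path of isotropic reflexions from `v` to `u`. -/
inductive IsIsoPath : RootDatum X H → List X → RootDatum X H → Prop
  | nil (v : RootDatum X H) : IsIsoPath v [] v
  | cons {v v' u : RootDatum X H} {x : X} {ms : List X} :
      IsIsoReflexion x v v' → IsIsoPath v' ms u → IsIsoPath v (x :: ms) u

/-- The skeleton `Sk(v)`. -/
def Skeleton (v : RootDatum X H) : Set (RootDatum X H) := {u | ∃ ms : List X, IsPath v ms u}

/-- The spine `Sp(v)`. -/
def Spine (v : RootDatum X H) : Set (RootDatum X H) := {u | ∃ ms : List X, IsIsoPath v ms u}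

/-- Admissibility of the component of `v`. -/
def Admissible (v : RootDatum X H) : Prop :=
  ∀ u ∈ Skeleton v, ∀ x, Reflectable u x → ∀ y, cartan u x y = 0 → cartan u y x = 0

/-- Full reflectability of the component of `v`. -/
def FullyReflectable (v : RootDatum X H) : Prop :=
  ∀ u ∈ Skeleton v, ∀ x, Reflectable u x

/-- Anisotropic real roots. -/
def DeltaAn (v : RootDatum X H) : Set (Module.Dual ℂ H) :=
  {α | ∃ u x, u ∈ Skeleton v ∧ Reflectable u x ∧ cartan u x x ≠ 0 ∧ u.b x = α}

/-- Isotropic real roots. -/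
def DeltaIs (v : RootDatum X H) : Set (Module.Dual ℂ H) :=
  {α | ∃ u x, u ∈ Skeleton v ∧ Reflectable u x ∧ cartan u x x = 0 ∧ u.b x = α}

/-- The coroot `α^∨ = (2 / a^u_{xx}) a_u(x)` of an anisotropic real root
(independent of the choice of presentation). -/
def coroot (v : RootDatum X H) (α : Module.Dual ℂ H) : H :=
  if h : ∃ u x, u ∈ Skeleton v ∧ Reflectable u x ∧ cartan u x x ≠ 0 ∧ u.b x = α then
    (2 / cartan h.choose h.choose_spec.choose h.choose_spec.choose) •
      h.choose.a h.choose_spec.choose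
  else 0

/-- The parity `p(α)` of an anisotropic real root. -/
def rootParity (v : RootDatum X H) (α : Module.Dual ℂ H) : ZMod 2 :=
  if h : ∃ u x, u ∈ Skeleton v ∧ Reflectable u x ∧ cartan u x x ≠ 0 ∧ u.b x = α then
    h.choose.p h.choose_spec.choose
  else 0

/-- Principal roots: anisotropic simple roots at vertices of the spine. -/
def SigmaPr (v : RootDatum X H) : Set (Module.Dual ℂ H) :=
  {α | ∃ u x, u ∈ Spine v ∧ Reflectable u x ∧ cartan u x x ≠ 0 ∧ u.b x = α}

/-- The set `π`: even principal roots together with doubles of odd principal roots. -/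
def piSet (v : RootDatum X H) : Set (Module.Dual ℂ H) :=
  {α | α ∈ SigmaPr v ∧ rootParity v α = 0} ∪
  {β | ∃ α ∈ SigmaPr v, rootParity v α = 1 ∧ β = (2 : ℂ) • α}

/-- The coroot of an element of `π` (with `(2α)^∨ = α^∨ / 2` for odd principal `α`). -/
def piCoroot (v : RootDatum X H) (β : Module.Dual ℂ H) : H :=
  if β ∈ SigmaPr v then coroot v β else (2 : ℂ)⁻¹ • coroot v ((2 : ℂ)⁻¹ • β)

/-- The Weyl group: the subgroup of `GL(h^*)` generated by the reflections
`s_α : λ ↦ λ - ⟨α^∨, λ⟩ α` for `α ∈ Δ_an`. -/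
def WeylGroup (v : RootDatum X H) :
    Subgroup (Module.Dual ℂ H ≃ₗ[ℂ] Module.Dual ℂ H) :=
  Subgroup.closure
    {w | ∃ α ∈ DeltaAn v, ∀ lam : Module.Dual ℂ H, w lam = lam - lam (coroot v α) • α}

/-- `Q^+_u`: nonnegative integral combinations of the simple roots at `u`. -/
def QPlus (u : RootDatum X H) : Set (Module.Dual ℂ H) :=
  {μ | ∃ k : X → ℕ, μ = ∑ x, (k x : ℂ) • u.b x}

/-- `Q_u`: integral combinations of the simple roots at `u`. -/
def QLattice (u : RootDatum X H) : Set (Module.Dual ℂ H) :=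
  {μ | ∃ k : X → ℤ, μ = ∑ x, (k x : ℂ) • u.b x}

/-- The convex cone of finite nonnegative real combinations of elements of `S`. -/
def coneR {M : Type*} [AddCommGroup M] [Module ℝ M] (S : Set M) : Set M :=
  {μ | ∃ (T : Finset M) (c : M → ℝ), ↑T ⊆ S ∧ (∀ m, 0 ≤ c m) ∧ μ = ∑ m ∈ T, c m • m}

/-- The totally positive cone `Q^{++}_ℝ`. -/
def QppR (v : RootDatum X H) : Set (Module.Dual ℂ H) :=
  ⋂ u ∈ Skeleton v, coneR (Set.range u.b)

/-- Indecomposability of a square matrix. -/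
def IsIndecMatrix {Y : Type*} [Fintype Y] (A : Y → Y → ℂ) : Prop :=
  Fintype.card Y = 1 ∨
  ∃ (s : ℕ) (e : Fin s ≃ Y), ∀ j : Fin s,
    A (e j) (e ⟨(j.1 + 1) % s, Nat.mod_lt _ j.pos⟩) ≠ 0

/-- Indecomposability of the component of `v`. -/
def IndecComp (v : RootDatum X H) : Prop :=
  ∀ u ∈ Spine v, IsIndecMatrix (cartan u)

/-- The Cartan matrix at `v` as a matrix. -/
def cartanMatrix (v : RootDatum X H) : Matrix X X ℂ := Matrix.of fun x y => cartan v x y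

/-- A Kac-Moody component: fully reflectable, admissible and `dim h = |X| + corank A^v`. -/
def IsKacMoodyComp (v : RootDatum X H) : Prop :=
  FullyReflectable v ∧ Admissible v ∧
  Module.finrank ℂ H = Fintype.card X + (Fintype.card X - (cartanMatrix v).rank)

/-- Type (Aff): the real span of `Q^{++}_ℝ` is one-dimensional. -/
def TypeAff (v : RootDatum X H) : Prop :=
  Module.finrank ℝ (Submodule.span ℝ (QppR v)) = 1

/-- The set `π_S` of `S`-principal elements. -/
def piS (v : RootDatum X H) : Set (Module.Dual ℂ H) :=
  {α | ∃ u x, u ∈ Spine v ∧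
    ((u.p x = 0 ∧ α = u.b x) ∨ (u.p x = 1 ∧ cartan u x x ≠ 0 ∧ α = (2 : ℂ) • u.b x))}

/-- `D`-equivalence of Cartan data. -/
def DEquivTo (u v : RootDatum X H) : Prop :=
  u.p = v.p ∧ ∃ D : X → ℂ, (∀ x, D x ≠ 0) ∧ ∀ x y, cartan u x y = D x * cartan v x y

/-- `Sk^D(v)`. -/
def SkD (v : RootDatum X H) : Set (RootDatum X H) := {u | u ∈ Skeleton v ∧ DEquivTo u v}

/-- `Sp^D(v)`. -/
def SpD (v : RootDatum X H) : Set (RootDatum X H) := {u | u ∈ Spine v ∧ DEquivTo u v}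

/-- `StarRel v u₁ u₂ u₃` says `u₁ * u₂ = u₃`, i.e. `σ^{u₁}(u₂) = u₃`: some path from `v`
ends at `u₂` and its namesake path from `u₁` ends at `u₃`. -/
def StarRel (v u₁ u₂ u₃ : RootDatum X H) : Prop :=
  ∃ ms : List X, IsPath v ms u₂ ∧ IsPath u₁ ms u₃

/-- `u` is the vertex `w·v` for `w` in the Weyl group. -/
def VertexOf (v : RootDatum X H) (w : Module.Dual ℂ H ≃ₗ[ℂ] Module.Dual ℂ H)
    (u : RootDatum X H) : Prop :=
  u ∈ Skeleton v ∧ ∀ x, u.b x = w (v.b x)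

end

section Aux

lemma linIndep_mat {ι : Type*} [Fintype ι] [DecidableEq ι] {M : Type*} [AddCommGroup M]
    [Module ℂ M] {f : ι → M} (hf : LinearIndependent ℂ f) (C : Matrix ι ι ℂ)
    (hC : IsUnit C.det) : LinearIndependent ℂ (fun i => ∑ j, C i j • f j) := by
  rw [Fintype.linearIndependent_iff] at hf ⊢
  intro t ht
  have h2 : ∀ j, (∑ i, t i * C i j) = 0 := by
    apply hf
    calc ∑ j, (∑ i, t i * C i j) • f j
        = ∑ j, ∑ i, (t i * C i j) • f j := by simp [Finset.sum_smul]
      _ = ∑ i, ∑ j, t i • (C i j • f j) := by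
          rw [Finset.sum_comm]; simp [mul_smul]
      _ = ∑ i, t i • ∑ j, C i j • f j := by simp [Finset.smul_sum]
      _ = 0 := ht
  have hv : Matrix.vecMul t C = 0 := by
    funext j
    simpa [Matrix.vecMul, dotProduct] using h2 j
  have : t = 0 := by
    have h1 : Matrix.vecMul t (C * C⁻¹) = t := by
      rw [Matrix.mul_nonsing_inv _ hC, Matrix.vecMul_one]
    rw [← Matrix.vecMul_vecMul, hv] at h1
    simpa using h1.symm
  intro i; rw [this]; rfl

variable {H : Type*} [AddCommGroup H] [Module ℂ H]

lemma fin3_funext {M : Type*} {f g : Fin 3 → M} (h0 : f 0 = g 0) (h1 : f 1 = g 1)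
    (h2 : f 2 = g 2) : f = g := by
  funext y
  match y with
  | 0 => exact h0
  | 1 => exact h1
  | 2 => exact h2

def St (a b c : ℂ) (v u : RootDatum (Fin 3) H) : Prop :=
  (u.a = v.a ∧ u.b = v.b ∧ u.p = v.p) ∨
  (u.a = ![-v.a 0, v.a 1 + a⁻¹ • v.a 0, v.a 2 + c • v.a 0] ∧
    u.b = ![-v.b 0, v.b 1 + v.b 0, v.b 2 + v.b 0] ∧ u.p = ![1, 0, 0]) ∨
  (u.a = ![v.a 0 + a • v.a 1, -v.a 1, v.a 2 + b⁻¹ • v.a 1] ∧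
    u.b = ![v.b 0 + v.b 1, -v.b 1, v.b 2 + v.b 1] ∧ u.p = ![0, 1, 0]) ∨
  (u.a = ![v.a 0 + c⁻¹ • v.a 2, v.a 1 + b • v.a 2, -v.a 2] ∧
    u.b = ![v.b 0 + v.b 2, v.b 1 + v.b 2, -v.b 2] ∧ u.p = ![0, 0, 1])

lemma step_lemma (a b c : ℂ) (ha : a ≠ 0) (hb : b ≠ 0) (hc : c ≠ 0)
    (v : RootDatum (Fin 3) H) (hp : ∀ i, v.p i = 1)
    (h00 : cartan v 0 0 = 0) (h01 : cartan v 0 1 = a) (h02 : cartan v 0 2 = 1)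
    (h10 : cartan v 1 0 = 1) (h11 : cartan v 1 1 = 0) (h12 : cartan v 1 2 = b)
    (h20 : cartan v 2 0 = c) (h21 : cartan v 2 1 = 1) (h22 : cartan v 2 2 = 0)
    {u u' : RootDatum (Fin 3) H} {x : Fin 3}
    (hst : St a b c v u) (hr : IsIsoReflexion x u u') : St a b c v u' := by
  have e00 : v.b 0 (v.a 0) = 0 := h00
  have e01 : v.b 1 (v.a 0) = a := h01
  have e02 : v.b 2 (v.a 0) = 1 := h02
  have e10 : v.b 0 (v.a 1) = 1 := h10
  have e11 : v.b 1 (v.a 1) = 0 := h11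
  have e12 : v.b 2 (v.a 1) = b := h12
  have e20 : v.b 0 (v.a 2) = c := h20
  have e21 : v.b 1 (v.a 2) = 1 := h21
  have e22 : v.b 2 (v.a 2) = 0 := h22
  have fin3 : ∀ z : Fin 3, z = 0 ∨ z = 1 ∨ z = 2 := by decide
  obtain ⟨hrefl, hxx, hax, hbx, hpx, hy⟩ := hr
  rcases hst with ⟨hua, hub, hup⟩ | ⟨hua, hub, hup⟩ | ⟨hua, hub, hup⟩ | ⟨hua, hub, hup⟩
  · -- base state
    have cu : ∀ x y, cartan u x y = cartan v x y := fun x y => by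
      show u.b y (u.a x) = v.b y (v.a x); rw [hua, hub]
    rcases fin3 x with rfl | rfl | rfl
    · -- x = 0 : go to state 1
      obtain ⟨ha1, hb1, hp1⟩ := (hy 1 (by decide)).2 (by rw [cu 0 1, h01]; exact ha)
      obtain ⟨ha2, hb2, hp2⟩ := (hy 2 (by decide)).2 (by rw [cu 0 2, h02]; exact one_ne_zero)
      refine Or.inr (Or.inl ⟨fin3_funext ?_ ?_ ?_, fin3_funext ?_ ?_ ?_, fin3_funext ?_ ?_ ?_⟩)
      · simp only [Matrix.cons_val_zero]; rw [hax, hua]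
      · simp only [Matrix.cons_val_one, Matrix.cons_val_zero, Matrix.head_cons]
        rw [ha1, cu 1 0, cu 0 1, h10, h01, hua, one_div]
      · simp only [Matrix.cons_val_two, Matrix.tail_cons, Matrix.head_cons]
        rw [ha2, cu 2 0, cu 0 2, h20, h02, hua, div_one]
      · simp only [Matrix.cons_val_zero]; rw [hbx, hub]
      · simp only [Matrix.cons_val_one, Matrix.cons_val_zero, Matrix.head_cons]; rw [hb1, hub]
      · simp only [Matrix.cons_val_two, Matrix.tail_cons, Matrix.head_cons]; rw [hb2, hub]
      · simp only [Matrix.cons_val_zero]; rw [hpx, hup, hp]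
      · simp only [Matrix.cons_val_one, Matrix.cons_val_zero, Matrix.head_cons]; rw [hp1, hup, hp]; decide
      · simp only [Matrix.cons_val_two, Matrix.tail_cons, Matrix.head_cons]
        rw [hp2, hup, hp]; decide
    · -- x = 1 : go to state 2
      obtain ⟨ha0, hb0, hp0⟩ := (hy 0 (by decide)).2 (by rw [cu 1 0, h10]; exact one_ne_zero)
      obtain ⟨ha2, hb2, hp2⟩ := (hy 2 (by decide)).2 (by rw [cu 1 2, h12]; exact hb)
      refine Or.inr (Or.inr (Or.inl ⟨fin3_funext ?_ ?_ ?_, fin3_funext ?_ ?_ ?_,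
        fin3_funext ?_ ?_ ?_⟩))
      · simp only [Matrix.cons_val_zero]
        rw [ha0, cu 0 1, cu 1 0, h01, h10, hua, div_one]
      · simp only [Matrix.cons_val_one, Matrix.cons_val_zero, Matrix.head_cons]; rw [hax, hua]
      · simp only [Matrix.cons_val_two, Matrix.tail_cons, Matrix.head_cons]
        rw [ha2, cu 2 1, cu 1 2, h21, h12, hua, one_div]
      · simp only [Matrix.cons_val_zero]; rw [hb0, hub]
      · simp only [Matrix.cons_val_one, Matrix.cons_val_zero, Matrix.head_cons]; rw [hbx, hub]
      · simp only [Matrix.cons_val_two, Matrix.tail_cons, Matrix.head_cons]; rw [hb2, hub]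
      · simp only [Matrix.cons_val_zero]; rw [hp0, hup, hp]; decide
      · simp only [Matrix.cons_val_one, Matrix.cons_val_zero, Matrix.head_cons]; rw [hpx, hup, hp]
      · simp only [Matrix.cons_val_two, Matrix.tail_cons, Matrix.head_cons]
        rw [hp2, hup, hp]; decide
    · -- x = 2 : go to state 3
      obtain ⟨ha0, hb0, hp0⟩ := (hy 0 (by decide)).2 (by rw [cu 2 0, h20]; exact hc)
      obtain ⟨ha1, hb1, hp1⟩ := (hy 1 (by decide)).2 (by rw [cu 2 1, h21]; exact one_ne_zero)
      refine Or.inr (Or.inr (Or.inr ⟨fin3_funext ?_ ?_ ?_, fin3_funext ?_ ?_ ?_,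
        fin3_funext ?_ ?_ ?_⟩))
      · simp only [Matrix.cons_val_zero]
        rw [ha0, cu 0 2, cu 2 0, h02, h20, hua, one_div]
      · simp only [Matrix.cons_val_one, Matrix.cons_val_zero, Matrix.head_cons]
        rw [ha1, cu 1 2, cu 2 1, h12, h21, hua, div_one]
      · simp only [Matrix.cons_val_two, Matrix.tail_cons, Matrix.head_cons]; rw [hax, hua]
      · simp only [Matrix.cons_val_zero]; rw [hb0, hub]
      · simp only [Matrix.cons_val_one, Matrix.cons_val_zero, Matrix.head_cons]; rw [hb1, hub]
      · simp only [Matrix.cons_val_two, Matrix.tail_cons, Matrix.head_cons]; rw [hbx, hub]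
      · simp only [Matrix.cons_val_zero]; rw [hp0, hup, hp]; decide
      · simp only [Matrix.cons_val_one, Matrix.cons_val_zero, Matrix.head_cons]; rw [hp1, hup, hp]; decide
      · simp only [Matrix.cons_val_two, Matrix.tail_cons, Matrix.head_cons]
        rw [hpx, hup, hp]
  · -- state 1 (r₀ v)
    have c00u : cartan u 0 0 = 0 := by
      show u.b 0 (u.a 0) = 0
      rw [hua, hub]
      simp only [Matrix.cons_val_zero, LinearMap.neg_apply, map_neg, neg_neg, e00]
    have c01u : cartan u 0 1 = -a := by
      show u.b 1 (u.a 0) = -a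
      rw [hua, hub]
      simp only [Matrix.cons_val_zero, Matrix.cons_val_one, Matrix.head_cons,
        LinearMap.add_apply, map_neg, e01, e00]
      ring
    have c02u : cartan u 0 2 = -1 := by
      show u.b 2 (u.a 0) = -1
      rw [hua, hub]
      simp only [Matrix.cons_val_zero, Matrix.cons_val_two, Matrix.tail_cons, Matrix.head_cons,
        LinearMap.add_apply, map_neg, e02, e00]
      ring
    have c10u : cartan u 1 0 = -1 := by
      show u.b 0 (u.a 1) = -1
      rw [hua, hub]
      simp only [Matrix.cons_val_zero, Matrix.cons_val_one, Matrix.head_cons,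
        LinearMap.neg_apply, map_add, map_smul, smul_eq_mul, e10, e00]
      ring
    have c20u : cartan u 2 0 = -c := by
      show u.b 0 (u.a 2) = -c
      rw [hua, hub]
      simp only [Matrix.cons_val_zero, Matrix.cons_val_two, Matrix.tail_cons, Matrix.head_cons,
        LinearMap.neg_apply, map_add, map_smul, smul_eq_mul, e20, e00]
      ring
    have c11u : cartan u 1 1 = 2 := by
      show u.b 1 (u.a 1) = 2
      rw [hua, hub]
      simp only [Matrix.cons_val_zero, Matrix.cons_val_one, Matrix.head_cons,
        LinearMap.add_apply, map_add, map_smul, smul_eq_mul, e11, e01, e10, e00]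
      field_simp
      ring
    have c22u : cartan u 2 2 = 2 * c := by
      show u.b 2 (u.a 2) = 2 * c
      rw [hua, hub]
      simp only [Matrix.cons_val_zero, Matrix.cons_val_two, Matrix.tail_cons, Matrix.head_cons,
        LinearMap.add_apply, map_add, map_smul, smul_eq_mul, e22, e02, e20, e00]
      ring
    rcases fin3 x with rfl | rfl | rfl
    · obtain ⟨ha1, hb1, hp1⟩ := (hy 1 (by decide)).2
        (by rw [c01u]; exact neg_ne_zero.mpr ha)
      obtain ⟨ha2, hb2, hp2⟩ := (hy 2 (by decide)).2
        (by rw [c02u]; exact neg_ne_zero.mpr one_ne_zero)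
      refine Or.inl ⟨fin3_funext ?_ ?_ ?_, fin3_funext ?_ ?_ ?_, fin3_funext ?_ ?_ ?_⟩
      · rw [hax, hua]; simp
      · rw [ha1, c10u, c01u, hua]
        simp only [Matrix.cons_val_zero, Matrix.cons_val_one, Matrix.head_cons]
        have hs : (-1 : ℂ) / -a = a⁻¹ := by field_simp
        rw [hs]; module
      · rw [ha2, c20u, c02u, hua]
        simp only [Matrix.cons_val_zero, Matrix.cons_val_two, Matrix.tail_cons, Matrix.head_cons]
        have hs : -c / (-1 : ℂ) = c := by norm_num
        rw [hs]; module
      · rw [hbx, hub]; simp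
      · rw [hb1, hub]
        simp only [Matrix.cons_val_zero, Matrix.cons_val_one, Matrix.head_cons]
        module
      · rw [hb2, hub]
        simp only [Matrix.cons_val_zero, Matrix.cons_val_two, Matrix.tail_cons, Matrix.head_cons]
        module
      · rw [hpx, hup]
        simp only [Matrix.cons_val_zero]
        exact (hp 0).symm
      · rw [hp1, hup, hp 1]
        simp only [Matrix.cons_val_one, Matrix.cons_val_zero, Matrix.head_cons]
        decide
      · rw [hp2, hup, hp 2]
        simp only [Matrix.cons_val_two, Matrix.tail_cons, Matrix.head_cons]
        decide
    · rw [c11u] at hxx; exact absurd hxx two_ne_zero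
    · rw [c22u] at hxx; exact absurd hxx (mul_ne_zero two_ne_zero hc)
  · -- state 2 (r₁ v)
    have c11u : cartan u 1 1 = 0 := by
      show u.b 1 (u.a 1) = 0
      rw [hua, hub]
      simp only [Matrix.cons_val_one, Matrix.cons_val_zero, Matrix.head_cons, LinearMap.neg_apply, map_neg,
        neg_neg, e11]
    have c10u : cartan u 1 0 = -1 := by
      show u.b 0 (u.a 1) = -1
      rw [hua, hub]
      simp only [Matrix.cons_val_zero, Matrix.cons_val_one, Matrix.head_cons,
        LinearMap.add_apply, map_neg, e10, e11]
      ring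
    have c12u : cartan u 1 2 = -b := by
      show u.b 2 (u.a 1) = -b
      rw [hua, hub]
      simp only [Matrix.cons_val_one, Matrix.cons_val_zero, Matrix.cons_val_two, Matrix.tail_cons, Matrix.head_cons,
        LinearMap.add_apply, map_neg, e12, e11]
      ring
    have c01u : cartan u 0 1 = -a := by
      show u.b 1 (u.a 0) = -a
      rw [hua, hub]
      simp only [Matrix.cons_val_zero, Matrix.cons_val_one, Matrix.head_cons,
        LinearMap.neg_apply, map_add, map_smul, smul_eq_mul, e01, e11]
      ring
    have c21u : cartan u 2 1 = -1 := by
      show u.b 1 (u.a 2) = -1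
      rw [hua, hub]
      simp only [Matrix.cons_val_one, Matrix.cons_val_zero, Matrix.cons_val_two, Matrix.tail_cons, Matrix.head_cons,
        LinearMap.neg_apply, map_add, map_smul, smul_eq_mul, e21, e11]
      ring
    have c00u : cartan u 0 0 = 2 * a := by
      show u.b 0 (u.a 0) = 2 * a
      rw [hua, hub]
      simp only [Matrix.cons_val_zero, Matrix.cons_val_one, Matrix.head_cons,
        LinearMap.add_apply, map_add, map_smul, smul_eq_mul, e00, e10, e01, e11]
      ring
    have c22u : cartan u 2 2 = 2 := by
      show u.b 2 (u.a 2) = 2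
      rw [hua, hub]
      simp only [Matrix.cons_val_one, Matrix.cons_val_zero, Matrix.cons_val_two, Matrix.tail_cons, Matrix.head_cons,
        LinearMap.add_apply, map_add, map_smul, smul_eq_mul, e22, e12, e21, e11]
      field_simp
      ring
    rcases fin3 x with rfl | rfl | rfl
    · rw [c00u] at hxx; exact absurd hxx (mul_ne_zero two_ne_zero ha)
    · obtain ⟨ha0, hb0, hp0⟩ := (hy 0 (by decide)).2
        (by rw [c10u]; exact neg_ne_zero.mpr one_ne_zero)
      obtain ⟨ha2, hb2, hp2⟩ := (hy 2 (by decide)).2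
        (by rw [c12u]; exact neg_ne_zero.mpr hb)
      refine Or.inl ⟨fin3_funext ?_ ?_ ?_, fin3_funext ?_ ?_ ?_, fin3_funext ?_ ?_ ?_⟩
      · rw [ha0, c01u, c10u, hua]
        simp only [Matrix.cons_val_zero, Matrix.cons_val_one, Matrix.head_cons]
        have hs : -a / (-1 : ℂ) = a := by norm_num
        rw [hs]; module
      · rw [hax, hua]; simp
      · rw [ha2, c21u, c12u, hua]
        simp only [Matrix.cons_val_one, Matrix.cons_val_zero, Matrix.cons_val_two, Matrix.tail_cons, Matrix.head_cons]
        have hs : (-1 : ℂ) / -b = b⁻¹ := by rw [neg_div_neg_eq, one_div]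
        rw [hs]; module
      · rw [hb0, hub]
        simp only [Matrix.cons_val_zero, Matrix.cons_val_one, Matrix.head_cons]
        module
      · rw [hbx, hub]; simp
      · rw [hb2, hub]
        simp only [Matrix.cons_val_one, Matrix.cons_val_zero, Matrix.cons_val_two, Matrix.tail_cons, Matrix.head_cons]
        module
      · rw [hp0, hup, hp 0]
        simp only [Matrix.cons_val_zero]
        decide
      · rw [hpx, hup]
        simp only [Matrix.cons_val_one, Matrix.cons_val_zero, Matrix.head_cons]
        exact (hp 1).symm
      · rw [hp2, hup, hp 2]
        simp only [Matrix.cons_val_two, Matrix.tail_cons, Matrix.head_cons]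
        decide
    · rw [c22u] at hxx; exact absurd hxx two_ne_zero
  · -- state 3 (r₂ v)
    have c22u : cartan u 2 2 = 0 := by
      show u.b 2 (u.a 2) = 0
      rw [hua, hub]
      simp only [Matrix.cons_val_two, Matrix.tail_cons, Matrix.head_cons, LinearMap.neg_apply,
        map_neg, neg_neg, e22]
    have c20u : cartan u 2 0 = -c := by
      show u.b 0 (u.a 2) = -c
      rw [hua, hub]
      simp only [Matrix.cons_val_zero, Matrix.cons_val_two, Matrix.tail_cons, Matrix.head_cons,
        LinearMap.add_apply, map_neg, e20, e22]
      ring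
    have c21u : cartan u 2 1 = -1 := by
      show u.b 1 (u.a 2) = -1
      rw [hua, hub]
      simp only [Matrix.cons_val_one, Matrix.cons_val_zero, Matrix.cons_val_two, Matrix.tail_cons, Matrix.head_cons,
        LinearMap.add_apply, map_neg, e21, e22]
      ring
    have c02u : cartan u 0 2 = -1 := by
      show u.b 2 (u.a 0) = -1
      rw [hua, hub]
      simp only [Matrix.cons_val_zero, Matrix.cons_val_two, Matrix.tail_cons, Matrix.head_cons,
        LinearMap.neg_apply, map_add, map_smul, smul_eq_mul, e02, e22]
      ring
    have c12u : cartan u 1 2 = -b := by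
      show u.b 2 (u.a 1) = -b
      rw [hua, hub]
      simp only [Matrix.cons_val_one, Matrix.cons_val_zero, Matrix.cons_val_two, Matrix.tail_cons, Matrix.head_cons,
        LinearMap.neg_apply, map_add, map_smul, smul_eq_mul, e12, e22]
      ring
    have c00u : cartan u 0 0 = 2 := by
      show u.b 0 (u.a 0) = 2
      rw [hua, hub]
      simp only [Matrix.cons_val_zero, Matrix.cons_val_two, Matrix.tail_cons, Matrix.head_cons,
        LinearMap.add_apply, map_add, map_smul, smul_eq_mul, e00, e20, e02, e22]
      field_simp
      ring
    have c11u : cartan u 1 1 = 2 * b := by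
      show u.b 1 (u.a 1) = 2 * b
      rw [hua, hub]
      simp only [Matrix.cons_val_one, Matrix.cons_val_zero, Matrix.cons_val_two, Matrix.tail_cons, Matrix.head_cons,
        LinearMap.add_apply, map_add, map_smul, smul_eq_mul, e11, e21, e12, e22]
      ring
    rcases fin3 x with rfl | rfl | rfl
    · rw [c00u] at hxx; exact absurd hxx two_ne_zero
    · rw [c11u] at hxx; exact absurd hxx (mul_ne_zero two_ne_zero hb)
    · obtain ⟨ha0, hb0, hp0⟩ := (hy 0 (by decide)).2
        (by rw [c20u]; exact neg_ne_zero.mpr hc)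
      obtain ⟨ha1, hb1, hp1⟩ := (hy 1 (by decide)).2
        (by rw [c21u]; exact neg_ne_zero.mpr one_ne_zero)
      refine Or.inl ⟨fin3_funext ?_ ?_ ?_, fin3_funext ?_ ?_ ?_, fin3_funext ?_ ?_ ?_⟩
      · rw [ha0, c02u, c20u, hua]
        simp only [Matrix.cons_val_zero, Matrix.cons_val_two, Matrix.tail_cons, Matrix.head_cons]
        have hs : (-1 : ℂ) / -c = c⁻¹ := by field_simp
        rw [hs]; module
      · rw [ha1, c12u, c21u, hua]
        simp only [Matrix.cons_val_one, Matrix.cons_val_zero, Matrix.cons_val_two, Matrix.tail_cons, Matrix.head_cons]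
        have hs : -b / (-1 : ℂ) = b := by norm_num
        rw [hs]; module
      · rw [hax, hua]; simp
      · rw [hb0, hub]
        simp only [Matrix.cons_val_zero, Matrix.cons_val_two, Matrix.tail_cons, Matrix.head_cons]
        module
      · rw [hb1, hub]
        simp only [Matrix.cons_val_one, Matrix.cons_val_zero, Matrix.cons_val_two, Matrix.tail_cons, Matrix.head_cons]
        module
      · rw [hbx, hub]; simp
      · rw [hp0, hup, hp 0]
        simp only [Matrix.cons_val_zero]
        decide
      · rw [hp1, hup, hp 1]
        simp only [Matrix.cons_val_one, Matrix.cons_val_zero, Matrix.head_cons]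
        decide
      · rw [hpx, hup]
        simp only [Matrix.cons_val_two, Matrix.tail_cons, Matrix.head_cons]
        exact (hp 2).symm

lemma path_class (a b c : ℂ) (ha : a ≠ 0) (hb : b ≠ 0) (hc : c ≠ 0)
    (v : RootDatum (Fin 3) H) (hp : ∀ i, v.p i = 1)
    (h00 : cartan v 0 0 = 0) (h01 : cartan v 0 1 = a) (h02 : cartan v 0 2 = 1)
    (h10 : cartan v 1 0 = 1) (h11 : cartan v 1 1 = 0) (h12 : cartan v 1 2 = b)
    (h20 : cartan v 2 0 = c) (h21 : cartan v 2 1 = 1) (h22 : cartan v 2 2 = 0)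
    {w u : RootDatum (Fin 3) H} {ms : List (Fin 3)}
    (hpath : IsIsoPath w ms u) (hw : St a b c v w) : St a b c v u := by
  induction hpath with
  | nil => exact hw
  | cons hr _ ih =>
    exact ih (step_lemma a b c ha hb hc v hp h00 h01 h02 h10 h11 h12 h20 h21 h22 hw hr)

lemma coeff_eq (v : RootDatum (Fin 3) H) {k l : Fin 3 → ℂ}
    (h : ∑ i, k i • v.b i = ∑ i, l i • v.b i) : ∀ i, k i = l i := by
  have h2 : ∑ i, (k i - l i) • v.b i = 0 := by
    simp only [sub_smul, Finset.sum_sub_distrib, h, sub_self]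
  intro i
  exact sub_eq_zero.mp (Fintype.linearIndependent_iff.mp v.lin_indep_b _ h2 i)

lemma spine_mem1 (a b c : ℂ) (ha : a ≠ 0) (hb : b ≠ 0) (hc : c ≠ 0)
    (v : RootDatum (Fin 3) H) (hp : ∀ i, v.p i = 1)
    (h00 : cartan v 0 0 = 0) (h01 : cartan v 0 1 = a) (h02 : cartan v 0 2 = 1)
    (h10 : cartan v 1 0 = 1) (h20 : cartan v 2 0 = c) :
    ∃ u ∈ Spine v, u.b = ![-v.b 0, v.b 1 + v.b 0, v.b 2 + v.b 0] := by
  have fin3 : ∀ z : Fin 3, z = 0 ∨ z = 1 ∨ z = 2 := by decide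
  have liA : LinearIndependent ℂ ![-v.a 0, v.a 1 + a⁻¹ • v.a 0, v.a 2 + c • v.a 0] := by
    have h := linIndep_mat v.lin_indep_a ![![(-1 : ℂ), 0, 0], ![a⁻¹, 1, 0], ![c, 0, 1]]
      (by
        have : Matrix.det ![![(-1 : ℂ), 0, 0], ![a⁻¹, 1, 0], ![c, 0, 1]] = -1 := by
          refine (Matrix.det_fin_three _).trans ?_
          norm_num [Matrix.cons_val_two, Matrix.tail_cons, Matrix.cons_val_one, Matrix.cons_val_zero, Matrix.head_cons]
        rw [this]; exact isUnit_one.neg)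
    have heq : (fun i => ∑ j, ![![(-1 : ℂ), 0, 0], ![a⁻¹, 1, 0], ![c, 0, 1]] i j • v.a j)
        = ![-v.a 0, v.a 1 + a⁻¹ • v.a 0, v.a 2 + c • v.a 0] := by
      apply fin3_funext <;> · rw [Fin.sum_univ_three]; simp [Matrix.vecHead, Matrix.vecTail]; try module
    rwa [heq] at h
  have liB : LinearIndependent ℂ ![-v.b 0, v.b 1 + v.b 0, v.b 2 + v.b 0] := by
    have h := linIndep_mat v.lin_indep_b ![![(-1 : ℂ), 0, 0], ![1, 1, 0], ![1, 0, 1]]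
      (by
        have : Matrix.det ![![(-1 : ℂ), 0, 0], ![1, 1, 0], ![1, 0, 1]] = -1 := by
          refine (Matrix.det_fin_three _).trans ?_
          norm_num [Matrix.cons_val_two, Matrix.tail_cons, Matrix.cons_val_one, Matrix.cons_val_zero, Matrix.head_cons]
        rw [this]; exact isUnit_one.neg)
    have heq : (fun i => ∑ j, ![![(-1 : ℂ), 0, 0], ![1, 1, 0], ![1, 0, 1]] i j • v.b j)
        = ![-v.b 0, v.b 1 + v.b 0, v.b 2 + v.b 0] := by
      apply fin3_funext <;> · rw [Fin.sum_univ_three]; simp [Matrix.vecHead, Matrix.vecTail]; try module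
    rwa [heq] at h
  refine ⟨⟨![-v.a 0, v.a 1 + a⁻¹ • v.a 0, v.a 2 + c • v.a 0],
    ![-v.b 0, v.b 1 + v.b 0, v.b 2 + v.b 0], ![1, 0, 0], liA, liB⟩,
    ⟨[0], IsIsoPath.cons ?_ (IsIsoPath.nil _)⟩, rfl⟩
  refine ⟨Or.inl ⟨h00, hp 0⟩, h00, rfl, rfl, (hp 0).symm, ?_⟩
  intro y hy
  rcases fin3 y with rfl | rfl | rfl
  · exact absurd rfl hy
  · constructor
    · intro h0; rw [h01] at h0; exact absurd h0 ha
    · intro _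
      refine ⟨?_, ?_, ?_⟩
      · show ![-v.a 0, v.a 1 + a⁻¹ • v.a 0, v.a 2 + c • v.a 0] 1
          = v.a 1 + (cartan v 1 0 / cartan v 0 1) • v.a 0
        rw [h10, h01, one_div]
        simp
      · show ![-v.b 0, v.b 1 + v.b 0, v.b 2 + v.b 0] 1 = v.b 1 + v.b 0
        simp
      · show (![1, 0, 0] : Fin 3 → ZMod 2) 1 = v.p 1 + 1
        rw [hp 1]; decide
  · constructor
    · intro h0; rw [h02] at h0; exact absurd h0 one_ne_zero
    · intro _
      refine ⟨?_, ?_, ?_⟩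
      · show ![-v.a 0, v.a 1 + a⁻¹ • v.a 0, v.a 2 + c • v.a 0] 2
          = v.a 2 + (cartan v 2 0 / cartan v 0 2) • v.a 0
        rw [h20, h02, div_one]
        simp
      · show ![-v.b 0, v.b 1 + v.b 0, v.b 2 + v.b 0] 2 = v.b 2 + v.b 0
        simp
      · show (![1, 0, 0] : Fin 3 → ZMod 2) 2 = v.p 2 + 1
        rw [hp 2]; decide

lemma spine_mem2 (a b c : ℂ) (hb : b ≠ 0)
    (v : RootDatum (Fin 3) H) (hp : ∀ i, v.p i = 1)
    (h01 : cartan v 0 1 = a) (h10 : cartan v 1 0 = 1)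
    (h11 : cartan v 1 1 = 0) (h12 : cartan v 1 2 = b) (h21 : cartan v 2 1 = 1) :
    ∃ u ∈ Spine v, u.b = ![v.b 0 + v.b 1, -v.b 1, v.b 2 + v.b 1] := by
  have fin3 : ∀ z : Fin 3, z = 0 ∨ z = 1 ∨ z = 2 := by decide
  have liA : LinearIndependent ℂ ![v.a 0 + a • v.a 1, -v.a 1, v.a 2 + b⁻¹ • v.a 1] := by
    have h := linIndep_mat v.lin_indep_a ![![1, a, 0], ![0, (-1 : ℂ), 0], ![0, b⁻¹, 1]]
      (by
        have : Matrix.det ![![1, a, 0], ![0, (-1 : ℂ), 0], ![0, b⁻¹, 1]] = -1 := by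
          refine (Matrix.det_fin_three _).trans ?_
          norm_num [Matrix.cons_val_two, Matrix.tail_cons, Matrix.cons_val_one, Matrix.cons_val_zero, Matrix.head_cons]
        rw [this]; exact isUnit_one.neg)
    have heq : (fun i => ∑ j, ![![1, a, 0], ![0, (-1 : ℂ), 0], ![0, b⁻¹, 1]] i j • v.a j)
        = ![v.a 0 + a • v.a 1, -v.a 1, v.a 2 + b⁻¹ • v.a 1] := by
      apply fin3_funext <;> · rw [Fin.sum_univ_three]; simp [Matrix.vecHead, Matrix.vecTail]; try module
    rwa [heq] at h
  have liB : LinearIndependent ℂ ![v.b 0 + v.b 1, -v.b 1, v.b 2 + v.b 1] := by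
    have h := linIndep_mat v.lin_indep_b ![![1, 1, 0], ![0, (-1 : ℂ), 0], ![0, 1, 1]]
      (by
        have : Matrix.det ![![1, 1, 0], ![0, (-1 : ℂ), 0], ![0, 1, 1]] = -1 := by
          refine (Matrix.det_fin_three _).trans ?_
          norm_num [Matrix.cons_val_two, Matrix.tail_cons, Matrix.cons_val_one, Matrix.cons_val_zero, Matrix.head_cons]
        rw [this]; exact isUnit_one.neg)
    have heq : (fun i => ∑ j, ![![1, 1, 0], ![0, (-1 : ℂ), 0], ![0, 1, 1]] i j • v.b j)
        = ![v.b 0 + v.b 1, -v.b 1, v.b 2 + v.b 1] := by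
      apply fin3_funext <;> · rw [Fin.sum_univ_three]; simp [Matrix.vecHead, Matrix.vecTail]; try module
    rwa [heq] at h
  refine ⟨⟨![v.a 0 + a • v.a 1, -v.a 1, v.a 2 + b⁻¹ • v.a 1],
    ![v.b 0 + v.b 1, -v.b 1, v.b 2 + v.b 1], ![0, 1, 0], liA, liB⟩,
    ⟨[1], IsIsoPath.cons ?_ (IsIsoPath.nil _)⟩, rfl⟩
  refine ⟨Or.inl ⟨h11, hp 1⟩, h11, ?_, ?_, ?_, ?_⟩
  · show ![v.a 0 + a • v.a 1, -v.a 1, v.a 2 + b⁻¹ • v.a 1] 1 = -v.a 1; simp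
  · show ![v.b 0 + v.b 1, -v.b 1, v.b 2 + v.b 1] 1 = -v.b 1; simp
  · show (![0, 1, 0] : Fin 3 → ZMod 2) 1 = v.p 1; rw [hp 1]; decide
  intro y hy
  rcases fin3 y with rfl | rfl | rfl
  · constructor
    · intro h0; rw [h10] at h0; exact absurd h0 one_ne_zero
    · intro _
      refine ⟨?_, ?_, ?_⟩
      · show ![v.a 0 + a • v.a 1, -v.a 1, v.a 2 + b⁻¹ • v.a 1] 0
          = v.a 0 + (cartan v 0 1 / cartan v 1 0) • v.a 1
        rw [h01, h10, div_one]
        simp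
      · show ![v.b 0 + v.b 1, -v.b 1, v.b 2 + v.b 1] 0 = v.b 0 + v.b 1
        simp
      · show (![0, 1, 0] : Fin 3 → ZMod 2) 0 = v.p 0 + 1
        rw [hp 0]; decide
  · exact absurd rfl hy
  · constructor
    · intro h0; rw [h12] at h0; exact absurd h0 hb
    · intro _
      refine ⟨?_, ?_, ?_⟩
      · show ![v.a 0 + a • v.a 1, -v.a 1, v.a 2 + b⁻¹ • v.a 1] 2
          = v.a 2 + (cartan v 2 1 / cartan v 1 2) • v.a 1
        rw [h21, h12, one_div]
        simp
      · show ![v.b 0 + v.b 1, -v.b 1, v.b 2 + v.b 1] 2 = v.b 2 + v.b 1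
        simp
      · show (![0, 1, 0] : Fin 3 → ZMod 2) 2 = v.p 2 + 1
        rw [hp 2]; decide

lemma spine_mem3 (b c : ℂ) (hc : c ≠ 0)
    (v : RootDatum (Fin 3) H) (hp : ∀ i, v.p i = 1)
    (h02 : cartan v 0 2 = 1) (h12 : cartan v 1 2 = b)
    (h20 : cartan v 2 0 = c) (h21 : cartan v 2 1 = 1) (h22 : cartan v 2 2 = 0) :
    ∃ u ∈ Spine v, u.b = ![v.b 0 + v.b 2, v.b 1 + v.b 2, -v.b 2] := by
  have fin3 : ∀ z : Fin 3, z = 0 ∨ z = 1 ∨ z = 2 := by decide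
  have liA : LinearIndependent ℂ ![v.a 0 + c⁻¹ • v.a 2, v.a 1 + b • v.a 2, -v.a 2] := by
    have h := linIndep_mat v.lin_indep_a ![![1, 0, c⁻¹], ![0, 1, b], ![0, 0, (-1 : ℂ)]]
      (by
        have : Matrix.det ![![1, 0, c⁻¹], ![0, 1, b], ![0, 0, (-1 : ℂ)]] = -1 := by
          refine (Matrix.det_fin_three _).trans ?_
          norm_num [Matrix.cons_val_two, Matrix.tail_cons, Matrix.cons_val_one, Matrix.cons_val_zero, Matrix.head_cons]
        rw [this]; exact isUnit_one.neg)
    have heq : (fun i => ∑ j, ![![1, 0, c⁻¹], ![0, 1, b], ![0, 0, (-1 : ℂ)]] i j • v.a j)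
        = ![v.a 0 + c⁻¹ • v.a 2, v.a 1 + b • v.a 2, -v.a 2] := by
      apply fin3_funext <;> · rw [Fin.sum_univ_three]; simp [Matrix.vecHead, Matrix.vecTail]; try module
    rwa [heq] at h
  have liB : LinearIndependent ℂ ![v.b 0 + v.b 2, v.b 1 + v.b 2, -v.b 2] := by
    have h := linIndep_mat v.lin_indep_b ![![1, 0, 1], ![0, 1, 1], ![0, 0, (-1 : ℂ)]]
      (by
        have : Matrix.det ![![1, 0, 1], ![0, 1, 1], ![0, 0, (-1 : ℂ)]] = -1 := by
          refine (Matrix.det_fin_three _).trans ?_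
          norm_num [Matrix.cons_val_two, Matrix.tail_cons, Matrix.cons_val_one, Matrix.cons_val_zero, Matrix.head_cons]
        rw [this]; exact isUnit_one.neg)
    have heq : (fun i => ∑ j, ![![1, 0, 1], ![0, 1, 1], ![0, 0, (-1 : ℂ)]] i j • v.b j)
        = ![v.b 0 + v.b 2, v.b 1 + v.b 2, -v.b 2] := by
      apply fin3_funext <;> · rw [Fin.sum_univ_three]; simp [Matrix.vecHead, Matrix.vecTail]; try module
    rwa [heq] at h
  refine ⟨⟨![v.a 0 + c⁻¹ • v.a 2, v.a 1 + b • v.a 2, -v.a 2],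
    ![v.b 0 + v.b 2, v.b 1 + v.b 2, -v.b 2], ![0, 0, 1], liA, liB⟩,
    ⟨[2], IsIsoPath.cons ?_ (IsIsoPath.nil _)⟩, rfl⟩
  refine ⟨Or.inl ⟨h22, hp 2⟩, h22, ?_, ?_, ?_, ?_⟩
  · show ![v.a 0 + c⁻¹ • v.a 2, v.a 1 + b • v.a 2, -v.a 2] 2 = -v.a 2; simp
  · show ![v.b 0 + v.b 2, v.b 1 + v.b 2, -v.b 2] 2 = -v.b 2; simp
  · show (![0, 0, 1] : Fin 3 → ZMod 2) 2 = v.p 2; rw [hp 2]; decide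
  intro y hy
  rcases fin3 y with rfl | rfl | rfl
  · constructor
    · intro h0; rw [h20] at h0; exact absurd h0 hc
    · intro _
      refine ⟨?_, ?_, ?_⟩
      · show ![v.a 0 + c⁻¹ • v.a 2, v.a 1 + b • v.a 2, -v.a 2] 0
          = v.a 0 + (cartan v 0 2 / cartan v 2 0) • v.a 2
        rw [h02, h20, one_div]
        simp
      · show ![v.b 0 + v.b 2, v.b 1 + v.b 2, -v.b 2] 0 = v.b 0 + v.b 2
        simp
      · show (![0, 0, 1] : Fin 3 → ZMod 2) 0 = v.p 0 + 1
        rw [hp 0]; decide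
  · constructor
    · intro h0; rw [h21] at h0; exact absurd h0 one_ne_zero
    · intro _
      refine ⟨?_, ?_, ?_⟩
      · show ![v.a 0 + c⁻¹ • v.a 2, v.a 1 + b • v.a 2, -v.a 2] 1
          = v.a 1 + (cartan v 1 2 / cartan v 2 1) • v.a 2
        rw [h12, h21, div_one]
        simp
      · show ![v.b 0 + v.b 2, v.b 1 + v.b 2, -v.b 2] 1 = v.b 1 + v.b 2
        simp
      · show (![0, 0, 1] : Fin 3 → ZMod 2) 1 = v.p 1 + 1
        rw [hp 1]; decide
  · exact absurd rfl hy

end Aux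

/-- For the component `Q^±(m,n,t)`, with the parity homomorphism
`p : Q_v → ℤ/2` (`p(β_i) = 1`): the even part of `⋂_{u ∈ Sp(v)} Q^+_u` equals `Q^+(π)`
and the odd part equals `δ + Q^+(π)`. -/
theorem stmt12 {H : Type*} [AddCommGroup H] [Module ℂ H] [FiniteDimensional ℂ H]
    (m n t : ℕ) (hm : 0 < m) (hn : 0 < n) (ht : 0 < t) (hmnt : 1 < m * n * t)
    (a b c : ℂ) (ha : a ≠ 0) (hb : b ≠ 0) (hc : c ≠ 0)
    (hra : 1 + a + 1 / c = -(m : ℂ)) (hrb : 1 + b + 1 / a = -(n : ℂ))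
    (hrc : 1 + c + 1 / b = -(t : ℂ))
    (v : RootDatum (Fin 3) H) (hdim : Module.finrank ℂ H = 3)
    (hp : ∀ i, v.p i = 1)
    (h00 : cartan v 0 0 = 0) (h01 : cartan v 0 1 = a) (h02 : cartan v 0 2 = 1)
    (h10 : cartan v 1 0 = 1) (h11 : cartan v 1 1 = 0) (h12 : cartan v 1 2 = b)
    (h20 : cartan v 2 0 = c) (h21 : cartan v 2 1 = 1) (h22 : cartan v 2 2 = 0) :
    {μ ∈ (⋂ u ∈ Spine v, QPlus u) |
        ∃ k : Fin 3 → ℤ, μ = (∑ i, (k i : ℂ) • v.b i) ∧ Even (∑ i, k i)} =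
      {μ | ∃ k : Fin 3 → ℕ,
        μ = ∑ i, (k i : ℂ) • ((v.b 0 + v.b 1 + v.b 2) - v.b i)} ∧
    {μ ∈ (⋂ u ∈ Spine v, QPlus u) |
        ∃ k : Fin 3 → ℤ, μ = (∑ i, (k i : ℂ) • v.b i) ∧ Odd (∑ i, k i)} =
      (fun ν => (v.b 0 + v.b 1 + v.b 2) + ν) ''
        {μ | ∃ k : Fin 3 → ℕ,
          μ = ∑ i, (k i : ℂ) • ((v.b 0 + v.b 1 + v.b 2) - v.b i)} := by
  have hvsp : v ∈ Spine v := ⟨[], IsIsoPath.nil v⟩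
  obtain ⟨u1, hu1s, hu1b⟩ := spine_mem1 a b c ha hb hc v hp h00 h01 h02 h10 h20
  obtain ⟨u2, hu2s, hu2b⟩ := spine_mem2 a b c hb v hp h01 h10 h11 h12 h21
  obtain ⟨u3, hu3s, hu3b⟩ := spine_mem3 b c hc v hp h02 h12 h20 h21 h22
  have hclass : ∀ u ∈ Spine v, u.b = v.b ∨
      u.b = ![-v.b 0, v.b 1 + v.b 0, v.b 2 + v.b 0] ∨
      u.b = ![v.b 0 + v.b 1, -v.b 1, v.b 2 + v.b 1] ∨
      u.b = ![v.b 0 + v.b 2, v.b 1 + v.b 2, -v.b 2] := by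
    rintro u ⟨ms, hpath⟩
    have hst := path_class a b c ha hb hc v hp h00 h01 h02 h10 h11 h12 h20 h21 h22 hpath
      (Or.inl ⟨rfl, rfl, rfl⟩)
    rcases hst with ⟨_, h, _⟩ | ⟨_, h, _⟩ | ⟨_, h, _⟩ | ⟨_, h, _⟩
    exacts [Or.inl h, Or.inr (Or.inl h), Or.inr (Or.inr (Or.inl h)),
      Or.inr (Or.inr (Or.inr h))]
  have hchar : ∀ μ : Module.Dual ℂ H, μ ∈ (⋂ u ∈ Spine v, QPlus u) ↔
      ∃ k : Fin 3 → ℕ, μ = ∑ i, ((k i : ℂ)) • v.b i ∧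
        k 0 ≤ k 1 + k 2 ∧ k 1 ≤ k 0 + k 2 ∧ k 2 ≤ k 0 + k 1 := by
    intro μ
    constructor
    · intro hμ
      have Hm : ∀ u ∈ Spine v, μ ∈ QPlus u := fun u hu => Set.mem_iInter₂.mp hμ u hu
      obtain ⟨k, hk⟩ := Hm v hvsp
      obtain ⟨p1, hq1⟩ := Hm u1 hu1s
      obtain ⟨p2, hq2⟩ := Hm u2 hu2s
      obtain ⟨p3, hq3⟩ := Hm u3 hu3s
      rw [hu1b] at hq1; rw [hu2b] at hq2; rw [hu3b] at hq3
      refine ⟨k, hk, ?_, ?_, ?_⟩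
      · have h1 : μ = ∑ i, (![(p1 1 : ℂ) + (p1 2 : ℂ) - (p1 0 : ℂ), (p1 1 : ℂ), (p1 2 : ℂ)] i)
            • v.b i := by
          rw [hq1, Fin.sum_univ_three, Fin.sum_univ_three]
          simp only [Matrix.cons_val_zero, Matrix.cons_val_one, Matrix.head_cons,
            Matrix.cons_val_two, Matrix.tail_cons]
          module
        have e := coeff_eq v (hk.symm.trans h1)
        have e0 := e 0; have e1 := e 1; have e2 := e 2
        simp only [Matrix.cons_val_zero, Matrix.cons_val_one, Matrix.head_cons,
          Matrix.cons_val_two, Matrix.tail_cons] at e0 e1 e2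
        have hn : ((k 0 + p1 0 : ℕ) : ℂ) = ((k 1 + k 2 : ℕ) : ℂ) := by
          push_cast
          rw [e0, e1, e2]; ring
        have := Nat.cast_injective hn
        omega
      · have h1 : μ = ∑ i, (![(p2 0 : ℂ), (p2 0 : ℂ) - (p2 1 : ℂ) + (p2 2 : ℂ), (p2 2 : ℂ)] i)
            • v.b i := by
          rw [hq2, Fin.sum_univ_three, Fin.sum_univ_three]
          simp only [Matrix.cons_val_zero, Matrix.cons_val_one, Matrix.head_cons,
            Matrix.cons_val_two, Matrix.tail_cons]
          module
        have e := coeff_eq v (hk.symm.trans h1)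
        have e0 := e 0; have e1 := e 1; have e2 := e 2
        simp only [Matrix.cons_val_zero, Matrix.cons_val_one, Matrix.head_cons,
          Matrix.cons_val_two, Matrix.tail_cons] at e0 e1 e2
        have hn : ((k 1 + p2 1 : ℕ) : ℂ) = ((k 0 + k 2 : ℕ) : ℂ) := by
          push_cast
          rw [e0, e1, e2]; ring
        have := Nat.cast_injective hn
        omega
      · have h1 : μ = ∑ i, (![(p3 0 : ℂ), (p3 1 : ℂ), (p3 0 : ℂ) + (p3 1 : ℂ) - (p3 2 : ℂ)] i)
            • v.b i := by
          rw [hq3, Fin.sum_univ_three, Fin.sum_univ_three]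
          simp only [Matrix.cons_val_zero, Matrix.cons_val_one, Matrix.head_cons,
            Matrix.cons_val_two, Matrix.tail_cons]
          module
        have e := coeff_eq v (hk.symm.trans h1)
        have e0 := e 0; have e1 := e 1; have e2 := e 2
        simp only [Matrix.cons_val_zero, Matrix.cons_val_one, Matrix.head_cons,
          Matrix.cons_val_two, Matrix.tail_cons] at e0 e1 e2
        have hn : ((k 2 + p3 2 : ℕ) : ℂ) = ((k 0 + k 1 : ℕ) : ℂ) := by
          push_cast
          rw [e0, e1, e2]; ring
        have := Nat.cast_injective hn
        omega
    · rintro ⟨k, hk, t0, t1, t2⟩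
      apply Set.mem_iInter₂.mpr
      intro u hu
      rcases hclass u hu with hbu | hbu | hbu | hbu
      · exact ⟨k, by rw [hbu]; exact hk⟩
      · refine ⟨![k 1 + k 2 - k 0, k 1, k 2], ?_⟩
        rw [hbu, hk, Fin.sum_univ_three, Fin.sum_univ_three]
        simp only [Matrix.cons_val_zero, Matrix.cons_val_one, Matrix.head_cons,
          Matrix.cons_val_two, Matrix.tail_cons]
        have hcast : ((k 1 + k 2 - k 0 : ℕ) : ℂ) = (k 1 : ℂ) + (k 2 : ℂ) - (k 0 : ℂ) := by
          rw [Nat.cast_sub t0]; push_cast; ring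
        rw [hcast]; module
      · refine ⟨![k 0, k 0 + k 2 - k 1, k 2], ?_⟩
        rw [hbu, hk, Fin.sum_univ_three, Fin.sum_univ_three]
        simp only [Matrix.cons_val_zero, Matrix.cons_val_one, Matrix.head_cons,
          Matrix.cons_val_two, Matrix.tail_cons]
        have hcast : ((k 0 + k 2 - k 1 : ℕ) : ℂ) = (k 0 : ℂ) + (k 2 : ℂ) - (k 1 : ℂ) := by
          rw [Nat.cast_sub t1]; push_cast; ring
        rw [hcast]; module
      · refine ⟨![k 0, k 1, k 0 + k 1 - k 2], ?_⟩
        rw [hbu, hk, Fin.sum_univ_three, Fin.sum_univ_three]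
        simp only [Matrix.cons_val_zero, Matrix.cons_val_one, Matrix.head_cons,
          Matrix.cons_val_two, Matrix.tail_cons]
        have hcast : ((k 0 + k 1 - k 2 : ℕ) : ℂ) = (k 0 : ℂ) + (k 1 : ℂ) - (k 2 : ℂ) := by
          rw [Nat.cast_sub t2]; push_cast; ring
        rw [hcast]; module
  constructor
  · ext μ
    constructor
    · rintro ⟨hμM, l, hμl, heven⟩
      obtain ⟨k, hk, t0, t1, t2⟩ := (hchar μ).mp hμM
      have e := coeff_eq v (hμl.symm.trans hk)
      have el : ∀ i, l i = (k i : ℤ) := fun i => by exact_mod_cast e i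
      obtain ⟨r, hr⟩ := heven
      rw [Fin.sum_univ_three, el 0, el 1, el 2] at hr
      refine ⟨![(k 1 + k 2 - k 0) / 2, (k 0 + k 2 - k 1) / 2, (k 0 + k 1 - k 2) / 2], ?_⟩
      rw [hk, Fin.sum_univ_three, Fin.sum_univ_three]
      simp only [Matrix.cons_val_zero, Matrix.cons_val_one, Matrix.head_cons,
        Matrix.cons_val_two, Matrix.tail_cons]
      have c0 : (k 0 : ℂ) = ((k 0 + k 2 - k 1) / 2 : ℕ) + ((k 0 + k 1 - k 2) / 2 : ℕ) := by
        have h' : k 0 = (k 0 + k 2 - k 1) / 2 + (k 0 + k 1 - k 2) / 2 := by omega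
        exact_mod_cast congrArg (Nat.cast : ℕ → ℂ) h'
      have c1 : (k 1 : ℂ) = ((k 1 + k 2 - k 0) / 2 : ℕ) + ((k 0 + k 1 - k 2) / 2 : ℕ) := by
        have h' : k 1 = (k 1 + k 2 - k 0) / 2 + (k 0 + k 1 - k 2) / 2 := by omega
        exact_mod_cast congrArg (Nat.cast : ℕ → ℂ) h'
      have c2 : (k 2 : ℂ) = ((k 1 + k 2 - k 0) / 2 : ℕ) + ((k 0 + k 2 - k 1) / 2 : ℕ) := by
        have h' : k 2 = (k 1 + k 2 - k 0) / 2 + (k 0 + k 2 - k 1) / 2 := by omega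
        exact_mod_cast congrArg (Nat.cast : ℕ → ℂ) h'
      rw [c0, c1, c2]; module
    · rintro ⟨q, rfl⟩
      refine ⟨(hchar _).mpr ⟨![q 1 + q 2, q 0 + q 2, q 0 + q 1], ?_, ?_, ?_, ?_⟩,
        ⟨![(q 1 : ℤ) + q 2, (q 0 : ℤ) + q 2, (q 0 : ℤ) + q 1], ?_, ?_⟩⟩
      · rw [Fin.sum_univ_three, Fin.sum_univ_three]
        simp only [Matrix.cons_val_zero, Matrix.cons_val_one, Matrix.head_cons,
          Matrix.cons_val_two, Matrix.tail_cons]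
        push_cast
        module
      · simp only [Matrix.cons_val_zero, Matrix.cons_val_one, Matrix.head_cons,
          Matrix.cons_val_two, Matrix.tail_cons]
        omega
      · simp only [Matrix.cons_val_zero, Matrix.cons_val_one, Matrix.head_cons,
          Matrix.cons_val_two, Matrix.tail_cons]
        omega
      · simp only [Matrix.cons_val_zero, Matrix.cons_val_one, Matrix.head_cons,
          Matrix.cons_val_two, Matrix.tail_cons]
        omega
      · rw [Fin.sum_univ_three, Fin.sum_univ_three]
        simp only [Matrix.cons_val_zero, Matrix.cons_val_one, Matrix.head_cons,
          Matrix.cons_val_two, Matrix.tail_cons]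
        push_cast
        module
      · rw [Fin.sum_univ_three]
        simp only [Matrix.cons_val_zero, Matrix.cons_val_one, Matrix.head_cons,
          Matrix.cons_val_two, Matrix.tail_cons]
        exact ⟨(q 0 : ℤ) + q 1 + q 2, by ring⟩
  · ext μ
    constructor
    · rintro ⟨hμM, l, hμl, hodd⟩
      obtain ⟨k, hk, t0, t1, t2⟩ := (hchar μ).mp hμM
      have e := coeff_eq v (hμl.symm.trans hk)
      have el : ∀ i, l i = (k i : ℤ) := fun i => by exact_mod_cast e i
      obtain ⟨r, hr⟩ := hodd
      rw [Fin.sum_univ_three, el 0, el 1, el 2] at hr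
      refine ⟨∑ i, ((![(k 1 + k 2 - k 0 - 1) / 2, (k 0 + k 2 - k 1 - 1) / 2,
        (k 0 + k 1 - k 2 - 1) / 2] i : ℕ) : ℂ) • ((v.b 0 + v.b 1 + v.b 2) - v.b i),
        ⟨![(k 1 + k 2 - k 0 - 1) / 2, (k 0 + k 2 - k 1 - 1) / 2,
          (k 0 + k 1 - k 2 - 1) / 2], rfl⟩, ?_⟩
      rw [hk, Fin.sum_univ_three, Fin.sum_univ_three]
      simp only [Matrix.cons_val_zero, Matrix.cons_val_one, Matrix.head_cons,
        Matrix.cons_val_two, Matrix.tail_cons]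
      have c0 : (k 0 : ℂ) = 1 + ((k 0 + k 2 - k 1 - 1) / 2 : ℕ) + ((k 0 + k 1 - k 2 - 1) / 2 : ℕ) := by
        have h' : k 0 = 1 + (k 0 + k 2 - k 1 - 1) / 2 + (k 0 + k 1 - k 2 - 1) / 2 := by omega
        push_cast
        exact_mod_cast congrArg (Nat.cast : ℕ → ℂ) h'
      have c1 : (k 1 : ℂ) = 1 + ((k 1 + k 2 - k 0 - 1) / 2 : ℕ) + ((k 0 + k 1 - k 2 - 1) / 2 : ℕ) := by
        have h' : k 1 = 1 + (k 1 + k 2 - k 0 - 1) / 2 + (k 0 + k 1 - k 2 - 1) / 2 := by omega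
        push_cast
        exact_mod_cast congrArg (Nat.cast : ℕ → ℂ) h'
      have c2 : (k 2 : ℂ) = 1 + ((k 1 + k 2 - k 0 - 1) / 2 : ℕ) + ((k 0 + k 2 - k 1 - 1) / 2 : ℕ) := by
        have h' : k 2 = 1 + (k 1 + k 2 - k 0 - 1) / 2 + (k 0 + k 2 - k 1 - 1) / 2 := by omega
        push_cast
        exact_mod_cast congrArg (Nat.cast : ℕ → ℂ) h'
      rw [c0, c1, c2]; module
    · rintro ⟨ν, ⟨q, rfl⟩, rfl⟩
      refine ⟨(hchar _).mpr ⟨![1 + q 1 + q 2, 1 + q 0 + q 2, 1 + q 0 + q 1], ?_, ?_, ?_, ?_⟩,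
        ⟨![(1 : ℤ) + q 1 + q 2, (1 : ℤ) + q 0 + q 2, (1 : ℤ) + q 0 + q 1], ?_, ?_⟩⟩
      · rw [Fin.sum_univ_three, Fin.sum_univ_three]
        simp only [Matrix.cons_val_zero, Matrix.cons_val_one, Matrix.head_cons,
          Matrix.cons_val_two, Matrix.tail_cons]
        push_cast
        module
      · simp only [Matrix.cons_val_zero, Matrix.cons_val_one, Matrix.head_cons,
          Matrix.cons_val_two, Matrix.tail_cons]
        omega
      · simp only [Matrix.cons_val_zero, Matrix.cons_val_one, Matrix.head_cons,
          Matrix.cons_val_two, Matrix.tail_cons]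
        omega
      · simp only [Matrix.cons_val_zero, Matrix.cons_val_one, Matrix.head_cons,
          Matrix.cons_val_two, Matrix.tail_cons]
        omega
      · rw [Fin.sum_univ_three, Fin.sum_univ_three]
        simp only [Matrix.cons_val_zero, Matrix.cons_val_one, Matrix.head_cons,
          Matrix.cons_val_two, Matrix.tail_cons]
        push_cast
        module
      · rw [Fin.sum_univ_three]
        simp only [Matrix.cons_val_zero, Matrix.cons_val_one, Matrix.head_cons,
          Matrix.cons_val_two, Matrix.tail_cons]
        exact ⟨(q 0 : ℤ) + q 1 + q 2 + 1, by ring⟩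
end KMS
end

section
/- Let Sk(v) be an admissible component. The operation u_1 * u_2 := sigma^{u_1}(u_2) makes Sk^D(v) into a group with unit element v, and Sp^D(v) is a subgroup of Sk^D(v) under this operation. -/
open scoped ComplexOrder

attribute [local instance] Classical.propDecidable

namespace KMS

section Aux

set_option linter.unusedSectionVars false

variable {X : Type*} [Fintype X] {H : Type*} [AddCommGroup H] [Module ℂ H]

theorem rd_ext {u w : RootDatum X H} (ha : u.a = w.a) (hb : u.b = w.b) (hp : u.p = w.p) :
    u = w := by
  cases u; cases w; simp only at ha hb hp; subst ha; subst hb; subst hp; rfl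

theorem cartan_def (u : RootDatum X H) (t s : X) : u.b s (u.a t) = cartan u t s := rfl

theorem li_coeffs {M : Type*} [AddCommGroup M] [Module ℂ M] {f : X → M}
    (hf : LinearIndependent ℂ f) {c c' : X → ℂ}
    (h : ∑ z, c z • f z = ∑ z, c' z • f z) : c = c' := by
  funext z
  have h0 : ∑ z, (c z - c' z) • f z = 0 := by
    simp only [sub_smul, Finset.sum_sub_distrib, h, sub_self]
  exact sub_eq_zero.1 (Fintype.linearIndependent_iff.1 hf (fun z => c z - c' z) h0 z)

theorem li_update {M : Type*} [AddCommGroup M] [Module ℂ M] {f : X → M}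
    (hf : LinearIndependent ℂ f) (x : X) (c : X → ℂ) (hcx : c x ≠ 1) :
    LinearIndependent ℂ fun y => f y - c y • f x := by
  rw [Fintype.linearIndependent_iff]
  intro g hg
  set S := ∑ z, g z * c z with hS
  have expand : ∑ y, g y • (f y - c y • f x) = ∑ y, g y • f y - S • f x := by
    rw [hS, Finset.sum_smul, ← Finset.sum_sub_distrib]
    exact Finset.sum_congr rfl fun y _ => by rw [smul_sub, smul_smul]
  have key : ∑ y, (g y - (if y = x then S else 0)) • f y = 0 := by
    have e2 : ∑ y, (g y - (if y = x then S else 0)) • f y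
        = ∑ y, g y • f y - ∑ y, (if y = x then S • f y else 0) := by
      simp only [sub_smul, Finset.sum_sub_distrib, ite_smul, zero_smul]
    rw [e2, Finset.sum_ite_eq' Finset.univ x (fun y => S • f y),
      if_pos (Finset.mem_univ x), ← expand, hg]
  have hcoef := Fintype.linearIndependent_iff.1 hf _ key
  have hgy : ∀ y, y ≠ x → g y = 0 := by
    intro y hy
    have := hcoef y
    simpa [hy] using this
  have hSx : S = g x * c x := by
    rw [hS]
    refine Finset.sum_eq_single x (fun z _ hz => by rw [hgy z hz, zero_mul])
      (fun h => absurd (Finset.mem_univ x) h)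
  intro y
  by_cases hy : y = x
  · subst hy
    have hx := hcoef y
    rw [if_pos rfl, hSx] at hx
    have : g y * (1 - c y) = 0 := by ring_nf; linear_combination hx
    rcases mul_eq_zero.1 this with h | h
    · exact h
    · exact absurd (by linear_combination -h) hcx
  · exact hgy y hy

end Aux
section Aux2

set_option linter.unusedSectionVars false

variable {X : Type*} [Fintype X] {H : Type*} [AddCommGroup H] [Module ℂ H]

/-- `u'` has the same Cartan datum as `u` up to rescaling rows by `D`. -/
def SameD (D : X → ℂ) (u u' : RootDatum X H) : Prop :=
  (∀ y z, cartan u' y z = D y * cartan u y z) ∧ u'.p = u.p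

theorem reflectable_sameD {D : X → ℂ} (hD : ∀ t, D t ≠ 0) {u u' : RootDatum X H}
    (hs : SameD D u u') {x : X} (h : Reflectable u x) : Reflectable u' x := by
  obtain ⟨hc, hp⟩ := hs
  rcases h with ⟨h0, h1⟩ | ⟨h0, h1, h2⟩ | ⟨h0, h1, h2⟩
  · exact Or.inl ⟨by rw [hc, h0, mul_zero], by rw [hp]; exact h1⟩
  · refine Or.inr (Or.inl ⟨by rw [hc]; exact mul_ne_zero (hD x) h0,
      by rw [hp]; exact h1, fun y hy => ?_⟩)
    obtain ⟨n, hn⟩ := h2 y hy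
    refine ⟨n, ?_⟩
    rw [hc, hc, show 2 * (D x * cartan u x y) = D x * (2 * cartan u x y) by ring,
      mul_div_mul_left _ _ (hD x)]
    exact hn
  · refine Or.inr (Or.inr ⟨by rw [hc]; exact mul_ne_zero (hD x) h0,
      by rw [hp]; exact h1, fun y hy => ?_⟩)
    obtain ⟨n, hn⟩ := h2 y hy
    exact ⟨n, by rw [hc, hc, mul_div_mul_left _ _ (hD x)]; exact hn⟩

theorem cartan_aniso {x : X} {u w : RootDatum X H} (h : IsAnisoReflexion x u w) (y z : X) :
    cartan w y z = cartan u y z := by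
  obtain ⟨-, hxx, -, ha, hb⟩ := h
  show w.b z (w.a y) = _
  rw [ha y, hb z]
  simp only [LinearMap.sub_apply, LinearMap.smul_apply, map_sub, map_smul, smul_eq_mul,
    cartan_def]
  field_simp
  ring

theorem p_aniso {x : X} {u w : RootDatum X H} (h : IsAnisoReflexion x u w) : w.p = u.p :=
  h.2.2.1

theorem cartan_iso {x : X} {u w : RootDatum X H} (h : IsIsoReflexion x u w) (y z : X) :
    cartan w y z =
      if y = x then -cartan u x z
      else if z = x then -cartan u y x
      else cartan u y z
        + (if cartan u x y = 0 then 0 else cartan u y x / cartan u x y * cartan u x z)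
        + (if cartan u x z = 0 then 0 else cartan u y x) := by
  obtain ⟨-, hxx, hax, hbx, hpx, hy⟩ := h
  show w.b z (w.a y) = _
  by_cases hyx : y = x
  · subst hyx
    rw [if_pos rfl, hax]
    by_cases hzy : z = y
    · subst hzy; rw [hbx]
      simp only [LinearMap.neg_apply, map_neg, cartan_def, neg_neg]
      rw [hxx]; ring
    · by_cases h0 : cartan u y z = 0
      · rw [((hy z hzy).1 h0).2.1]
        simp only [map_neg, cartan_def, h0]
      · rw [(((hy z hzy).2) h0).2.1]
        simp only [LinearMap.add_apply, map_neg, cartan_def]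
        rw [hxx]; ring
  · rw [if_neg hyx]
    have hay : w.a y = u.a y + (if cartan u x y = 0 then 0 else cartan u y x / cartan u x y) • u.a x := by
      by_cases h0 : cartan u x y = 0
      · rw [((hy y hyx).1 h0).1, if_pos h0, zero_smul, add_zero]
      · rw [((hy y hyx).2 h0).1, if_neg h0]
    by_cases hzx : z = x
    · subst hzx
      rw [if_pos rfl, hbx, hay]
      simp only [LinearMap.neg_apply, map_add, map_smul, smul_eq_mul, cartan_def]
      rw [hxx]; ring
    · rw [if_neg hzx]
      have hbz : w.b z = u.b z + (if cartan u x z = 0 then 0 else (1:ℂ)) • u.b x := by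
        by_cases h0 : cartan u x z = 0
        · rw [((hy z hzx).1 h0).2.1, if_pos h0, zero_smul, add_zero]
        · rw [((hy z hzx).2 h0).2.1, if_neg h0, one_smul]
      rw [hay, hbz]
      simp only [LinearMap.add_apply, LinearMap.smul_apply, map_add, map_smul, smul_eq_mul,
        cartan_def]
      rw [hxx]
      by_cases h0 : cartan u x y = 0 <;> by_cases h1 : cartan u x z = 0 <;>
        simp [h0, h1] <;> ring

theorem p_iso {x : X} {u w : RootDatum X H} (h : IsIsoReflexion x u w) (y : X) :
    w.p y = if y = x then u.p x
      else if cartan u x y = 0 then u.p y else u.p y + 1 := by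
  obtain ⟨-, hxx, hax, hbx, hpx, hy⟩ := h
  by_cases hyx : y = x
  · subst hyx; rw [if_pos rfl]; exact hpx
  · rw [if_neg hyx]
    by_cases h0 : cartan u x y = 0
    · rw [if_pos h0]; exact ((hy y hyx).1 h0).2.2
    · rw [if_neg h0]; exact ((hy y hyx).2 h0).2.2

end Aux2
section Aux3

set_option linter.unusedSectionVars false

variable {X : Type*} [Fintype X] {H : Type*} [AddCommGroup H] [Module ℂ H]

theorem sameD_step {D : X → ℂ} (hD : ∀ t, D t ≠ 0) {u u' w w' : RootDatum X H} {x : X}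
    (hs : SameD D u u') (h : IsReflexion x u w) (h' : IsReflexion x u' w') :
    SameD D w w' := by
  obtain ⟨hc, hp⟩ := hs
  have hzero : ∀ y z, cartan u' y z = 0 ↔ cartan u y z = 0 := by
    intro y z
    rw [hc]
    constructor
    · intro h
      rcases mul_eq_zero.1 h with h | h
      · exact absurd h (hD y)
      · exact h
    · intro h; rw [h, mul_zero]
  rcases h with ha | hi
  · rcases h' with ha' | hi'
    · exact ⟨fun y z => by rw [cartan_aniso ha, cartan_aniso ha', hc],
        by rw [p_aniso ha, p_aniso ha', hp]⟩
    · exact absurd hi'.2.1 (by rw [hc]; exact mul_ne_zero (hD x) ha.2.1)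
  · rcases h' with ha' | hi'
    · exact absurd ((hzero x x).1 ∘ id) (fun hh => ha'.2.1 (by rw [hc, hi.2.1, mul_zero]))
    · constructor
      · intro y z
        rw [cartan_iso hi, cartan_iso hi']
        by_cases hyx : y = x
        · subst hyx; rw [if_pos rfl, if_pos rfl, hc]; ring
        · rw [if_neg hyx, if_neg hyx]
          by_cases hzx : z = x
          · subst hzx; rw [if_pos rfl, if_pos rfl, hc]; ring
          · rw [if_neg hzx, if_neg hzx]
            by_cases hxy : cartan u x y = 0
            · have hxy' : cartan u' x y = 0 := (hzero x y).2 hxy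
              by_cases hxz : cartan u x z = 0
              · have hxz' : cartan u' x z = 0 := (hzero x z).2 hxz
                rw [if_pos hxy, if_pos hxy', if_pos hxz, if_pos hxz', hc]; ring
              · have hxz' : cartan u' x z ≠ 0 := fun hh => hxz ((hzero x z).1 hh)
                rw [if_pos hxy, if_pos hxy', if_neg hxz, if_neg hxz', hc, hc]; ring
            · have hxy' : cartan u' x y ≠ 0 := fun hh => hxy ((hzero x y).1 hh)
              by_cases hxz : cartan u x z = 0
              · have hxz' : cartan u' x z = 0 := (hzero x z).2 hxz
                rw [if_neg hxy, if_neg hxy', if_pos hxz, if_pos hxz']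
                simp only [hc, hxz, mul_zero, zero_mul, add_zero]
              · have hxz' : cartan u' x z ≠ 0 := fun hh => hxz ((hzero x z).1 hh)
                rw [if_neg hxy, if_neg hxy', if_neg hxz, if_neg hxz']
                simp only [hc]
                field_simp [hxy, hD x] <;> ring
      · funext y
        rw [p_iso hi, p_iso hi']
        have hpy := congrFun hp
        by_cases hyx : y = x
        · subst hyx; rw [if_pos rfl, if_pos rfl, hpy]
        · rw [if_neg hyx, if_neg hyx]
          by_cases hxy : cartan u x y = 0
          · rw [if_pos hxy, if_pos ((hzero x y).2 hxy), hpy]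
          · rw [if_neg hxy, if_neg (fun hh => hxy ((hzero x y).1 hh)), hpy]

theorem aniso_exists (u : RootDatum X H) (x : X) (hr : Reflectable u x)
    (hxx : cartan u x x ≠ 0) : ∃ w, IsAnisoReflexion x u w := by
  have hc2 : (2 * cartan u x x / cartan u x x : ℂ) = 2 := by field_simp
  have hla := li_update u.lin_indep_a x (fun y => 2 * cartan u y x / cartan u x x)
    (by show 2 * cartan u x x / cartan u x x ≠ 1; rw [hc2]; norm_num)
  have hlb := li_update u.lin_indep_b x (fun y => 2 * cartan u x y / cartan u x x)
    (by show 2 * cartan u x x / cartan u x x ≠ 1; rw [hc2]; norm_num)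
  exact ⟨⟨_, _, u.p, hla, hlb⟩, hr, hxx, rfl, fun y => rfl, fun y => rfl⟩

theorem iso_exists (u : RootDatum X H) (x : X) (hr : Reflectable u x)
    (hxx : cartan u x x = 0) : ∃ w, IsIsoReflexion x u w := by
  set ca : X → ℂ := fun y =>
    if y = x then 2 else if cartan u x y = 0 then 0 else -(cartan u y x / cartan u x y)
    with hca
  set cb : X → ℂ := fun y => if y = x then 2 else if cartan u x y = 0 then 0 else -1
    with hcb
  have hcax : ca x = 2 := by simp [hca]
  have hcbx : cb x = 2 := by simp [hcb]
  have hla := li_update u.lin_indep_a x ca (by rw [hcax]; norm_num)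
  have hlb := li_update u.lin_indep_b x cb (by rw [hcbx]; norm_num)
  refine ⟨⟨fun y => u.a y - ca y • u.a x, fun y => u.b y - cb y • u.b x,
    fun y => if y = x then u.p x else if cartan u x y = 0 then u.p y else u.p y + 1,
    hla, hlb⟩, hr, hxx, ?_, ?_, by simp, fun y hyx => ?_⟩
  · show u.a x - ca x • u.a x = -u.a x
    rw [hcax, two_smul]; abel
  · show u.b x - cb x • u.b x = -u.b x
    rw [hcbx, two_smul]; abel
  · constructor
    · intro h0
      refine ⟨?_, ?_, ?_⟩ <;> simp [hca, hcb, hyx, h0]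
    · intro h0
      refine ⟨?_, ?_, ?_⟩
      · show u.a y - ca y • u.a x = _
        rw [hca]; simp only [if_neg hyx, if_neg h0, neg_smul, sub_neg_eq_add]
      · show u.b y - cb y • u.b x = _
        rw [hcb]; simp only [if_neg hyx, if_neg h0, neg_smul, one_smul, sub_neg_eq_add]
      · simp [hyx, h0]

theorem step_exists {D : X → ℂ} (hD : ∀ t, D t ≠ 0) {u u' w : RootDatum X H} {x : X}
    (hs : SameD D u u') (h : IsReflexion x u w) : ∃ w', IsReflexion x u' w' := by
  rcases h with ha | hi
  · obtain ⟨w', hw'⟩ := aniso_exists u' x (reflectable_sameD hD hs ha.1)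
      (by rw [hs.1]; exact mul_ne_zero (hD x) ha.2.1)
    exact ⟨w', Or.inl hw'⟩
  · obtain ⟨w', hw'⟩ := iso_exists u' x (reflectable_sameD hD hs hi.1)
      (by rw [hs.1, hi.2.1, mul_zero])
    exact ⟨w', Or.inr hw'⟩

theorem iso_step_exists {D : X → ℂ} (hD : ∀ t, D t ≠ 0) {u u' w : RootDatum X H} {x : X}
    (hs : SameD D u u') (h : IsIsoReflexion x u w) : ∃ w', IsIsoReflexion x u' w' :=
  iso_exists u' x (reflectable_sameD hD hs h.1) (by rw [hs.1, h.2.1, mul_zero])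

end Aux3
section Aux4

set_option linter.unusedSectionVars false

variable {X : Type*} [Fintype X] {H : Type*} [AddCommGroup H] [Module ℂ H]

theorem reflectable_congr {u w : RootDatum X H} (hc : ∀ y z, cartan w y z = cartan u y z)
    (hp : w.p = u.p) {x : X} (h : Reflectable u x) : Reflectable w x :=
  reflectable_sameD (D := fun _ => 1) (fun _ => one_ne_zero)
    ⟨fun y z => by rw [hc, one_mul], hp⟩ h

theorem aniso_symm {x : X} {u w : RootDatum X H} (h : IsAnisoReflexion x u w) :
    IsAnisoReflexion x w u := by
  have hcc : ∀ y z, cartan w y z = cartan u y z := cartan_aniso h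
  obtain ⟨hr, hxx, hp, ha, hb⟩ := h
  refine ⟨reflectable_congr hcc hp hr, by rw [hcc]; exact hxx, hp.symm, ?_, ?_⟩
  · intro y
    rw [hcc, hcc, ha y, ha x]
    match_scalars <;> (field_simp; try ring)
  · intro y
    rw [hcc, hcc, hb y, hb x]
    match_scalars <;> (field_simp; try ring)

theorem iso_symm {x : X} {u w : RootDatum X H} (h : IsIsoReflexion x u w) :
    IsIsoReflexion x w u := by
  have hci := cartan_iso h
  have hpi := p_iso h
  obtain ⟨hr, hxx, hax, hbx, hpx, hy⟩ := h
  have hwxx : cartan w x x = 0 := by rw [hci x x, if_pos rfl, hxx, neg_zero]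
  have hrp : u.p x = 1 := by
    rcases hr with ⟨-, h1⟩ | ⟨h0, -⟩ | ⟨h0, -⟩
    · exact h1
    · exact absurd hxx h0
    · exact absurd hxx h0
  refine ⟨Or.inl ⟨hwxx, by rw [hpx]; exact hrp⟩, hwxx,
    by rw [hax, neg_neg], by rw [hbx, neg_neg], hpx.symm, ?_⟩
  intro y hyx
  have hcxy : cartan w x y = -cartan u x y := by rw [hci x y, if_pos rfl]
  constructor
  · intro h0
    have h0' : cartan u x y = 0 := by
      have := hcxy.symm.trans h0
      simpa using this
    obtain ⟨h1, h2, h3⟩ := (hy y hyx).1 h0'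
    exact ⟨h1.symm, h2.symm, h3.symm⟩
  · intro h0
    have h0' : cartan u x y ≠ 0 := by
      intro hh
      rw [hcxy, hh, neg_zero] at h0
      exact h0 rfl
    obtain ⟨h1, h2, h3⟩ := (hy y hyx).2 h0'
    have hcyx : cartan w y x = -cartan u y x := by
      rw [hci y x, if_neg hyx, if_pos rfl]
    refine ⟨?_, ?_, ?_⟩
    · rw [hcyx, hcxy, h1, hax]
      match_scalars <;> (field_simp; try ring)
    · rw [h2, hbx]; abel
    · rw [h3, add_assoc]
      norm_num
      exact (CharTwo.add_self_eq_zero (1 : ZMod 2))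
  
theorem reflexion_symm {x : X} {u w : RootDatum X H} (h : IsReflexion x u w) :
    IsReflexion x w u := by
  rcases h with h | h
  · exact Or.inl (aniso_symm h)
  · exact Or.inr (iso_symm h)

theorem isPath_append {v u w : RootDatum X H} {ms ls : List X}
    (h1 : IsPath v ms u) (h2 : IsPath u ls w) : IsPath v (ms ++ ls) w := by
  induction h1 with
  | nil => exact h2
  | cons hr _ ih => exact .cons hr (ih h2)

theorem isoPath_append {v u w : RootDatum X H} {ms ls : List X}
    (h1 : IsIsoPath v ms u) (h2 : IsIsoPath u ls w) : IsIsoPath v (ms ++ ls) w := by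
  induction h1 with
  | nil => exact h2
  | cons hr _ ih => exact .cons hr (ih h2)

theorem isoPath_toPath {v u : RootDatum X H} {ms : List X}
    (h : IsIsoPath v ms u) : IsPath v ms u := by
  induction h with
  | nil => exact .nil _
  | cons hr _ ih => exact .cons (Or.inr hr) ih

theorem isPath_reverse {v u : RootDatum X H} {ms : List X}
    (h : IsPath v ms u) : IsPath u ms.reverse v := by
  induction h with
  | nil => exact .nil _
  | @cons v v' u x ms hr _ ih =>
      rw [List.reverse_cons]
      exact isPath_append ih (.cons (reflexion_symm hr) (.nil _))

theorem isoPath_reverse {v u : RootDatum X H} {ms : List X}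
    (h : IsIsoPath v ms u) : IsIsoPath u ms.reverse v := by
  induction h with
  | nil => exact .nil _
  | @cons v v' u x ms hr _ ih =>
      rw [List.reverse_cons]
      exact isoPath_append ih (.cons (iso_symm hr) (.nil _))

end Aux4
section Aux5

set_option linter.unusedSectionVars false

variable {X : Type*} [Fintype X] {H : Type*} [AddCommGroup H] [Module ℂ H]

/-- The invariant relating a path from `v₀` with its namesake path from `u₁`. -/
def Rel (D : X → ℂ) (v₀ u₁ u u' : RootDatum X H) : Prop :=
  SameD D u u' ∧
  ∃ M N : X → X → ℂ,
    (∀ y, u.a y = ∑ z, M y z • v₀.a z) ∧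
    (∀ y, u'.a y = ∑ z, (D y * M y z * (D z)⁻¹) • u₁.a z) ∧
    (∀ y, u.b y = ∑ z, N y z • v₀.b z) ∧
    (∀ y, u'.b y = ∑ z, N y z • u₁.b z)

theorem rel_refl {D : X → ℂ} (hD : ∀ t, D t ≠ 0) {v₀ u₁ : RootDatum X H}
    (hs : SameD D v₀ u₁) : Rel D v₀ u₁ v₀ u₁ := by
  refine ⟨hs, fun y z => if z = y then 1 else 0, fun y z => if z = y then 1 else 0,
    ?_, ?_, ?_, ?_⟩
  · intro y
    show v₀.a y = ∑ z, (if z = y then (1:ℂ) else 0) • v₀.a z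
    rw [Finset.sum_eq_single y (fun z _ hz => by rw [if_neg hz, zero_smul])
      (fun h => absurd (Finset.mem_univ y) h), if_pos rfl, one_smul]
  · intro y
    show u₁.a y = ∑ z, (D y * (if z = y then (1:ℂ) else 0) * (D z)⁻¹) • u₁.a z
    rw [Finset.sum_eq_single y
      (fun z _ hz => by rw [if_neg hz, mul_zero, zero_mul, zero_smul])
      (fun h => absurd (Finset.mem_univ y) h), if_pos rfl, mul_one,
      mul_inv_cancel₀ (hD y), one_smul]
  · intro y
    show v₀.b y = ∑ z, (if z = y then (1:ℂ) else 0) • v₀.b z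
    rw [Finset.sum_eq_single y (fun z _ hz => by rw [if_neg hz, zero_smul])
      (fun h => absurd (Finset.mem_univ y) h), if_pos rfl, one_smul]
  · intro y
    show u₁.b y = ∑ z, (if z = y then (1:ℂ) else 0) • u₁.b z
    rw [Finset.sum_eq_single y (fun z _ hz => by rw [if_neg hz, zero_smul])
      (fun h => absurd (Finset.mem_univ y) h), if_pos rfl, one_smul]

theorem rel_unique {D : X → ℂ} {v₀ u₁ u t t' : RootDatum X H}
    (h : Rel D v₀ u₁ u t) (h' : Rel D v₀ u₁ u t') : t = t' := by
  obtain ⟨⟨-, hp⟩, M, N, hM, hM', hN, hN'⟩ := h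
  obtain ⟨⟨-, hp'⟩, M2, N2, hM2, hM2', hN2, hN2'⟩ := h'
  have hMM : ∀ y, M y = M2 y := fun y =>
    li_coeffs v₀.lin_indep_a ((hM y).symm.trans (hM2 y))
  have hNN : ∀ y, N y = N2 y := fun y =>
    li_coeffs v₀.lin_indep_b ((hN y).symm.trans (hN2 y))
  refine rd_ext ?_ ?_ (hp.trans hp'.symm)
  · funext y
    rw [hM' y, hM2' y, hMM y]
  · funext y
    rw [hN' y, hN2' y, hNN y]

theorem rel_step {D : X → ℂ} (hD : ∀ t, D t ≠ 0) {v₀ u₁ u u' w w' : RootDatum X H} {x : X}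
    (hr : Rel D v₀ u₁ u u') (h : IsReflexion x u w) (h' : IsReflexion x u' w') :
    Rel D v₀ u₁ w w' := by
  obtain ⟨hs, M, N, hM, hM', hN, hN'⟩ := hr
  refine ⟨sameD_step hD hs h h', ?_⟩
  obtain ⟨hc, hp⟩ := hs
  rcases h with ha | hi
  · obtain ⟨-, hxx, -, haa, hab⟩ := ha
    rcases h' with ha' | hi'
    swap
    · exact absurd hi'.2.1 (by rw [hc]; exact mul_ne_zero (hD x) hxx)
    obtain ⟨-, hxx', -, haa', hab'⟩ := ha'
    refine ⟨fun y z => M y z - 2 * cartan u y x / cartan u x x * M x z,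
            fun y z => N y z - 2 * cartan u x y / cartan u x x * N x z, ?_, ?_, ?_, ?_⟩
    · intro y
      rw [haa y, hM y, hM x, Finset.smul_sum, ← Finset.sum_sub_distrib]
      exact Finset.sum_congr rfl fun z _ => by rw [smul_smul, ← sub_smul]
    · intro y
      rw [haa' y, hM' y, hM' x, Finset.smul_sum, ← Finset.sum_sub_distrib]
      refine Finset.sum_congr rfl fun z _ => ?_
      rw [smul_smul, ← sub_smul]
      congr 1
      rw [hc, hc]
      field_simp [hD x, hD z, hxx]
    · intro y
      rw [hab y, hN y, hN x, Finset.smul_sum, ← Finset.sum_sub_distrib]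
      exact Finset.sum_congr rfl fun z _ => by rw [smul_smul, ← sub_smul]
    · intro y
      rw [hab' y, hN' y, hN' x, Finset.smul_sum, ← Finset.sum_sub_distrib]
      refine Finset.sum_congr rfl fun z _ => ?_
      rw [smul_smul, ← sub_smul]
      congr 1
      rw [hc, hc, show 2 * (D x * cartan u x y) = D x * (2 * cartan u x y) by ring,
        mul_div_mul_left _ _ (hD x)]
  · obtain ⟨-, hxx, hax, hbx, -, hiy⟩ := hi
    rcases h' with ha' | hi'
    · exact absurd ha'.2.1 (by rw [hc, hxx, mul_zero]; exact fun hh => hh rfl)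
    obtain ⟨-, hxx', hax', hbx', -, hiy'⟩ := hi'
    have hzero : ∀ z, cartan u' x z = 0 ↔ cartan u x z = 0 := by
      intro z
      rw [hc]
      constructor
      · intro hh
        rcases mul_eq_zero.1 hh with hh | hh
        · exact absurd hh (hD x)
        · exact hh
      · intro hh; rw [hh, mul_zero]
    refine ⟨fun y z => if y = x then -M x z
        else if cartan u x y = 0 then M y z else M y z + cartan u y x / cartan u x y * M x z,
      fun y z => if y = x then -N x z
        else if cartan u x y = 0 then N y z else N y z + N x z, ?_, ?_, ?_, ?_⟩
    · intro y
      by_cases hyx : y = x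
      · simp only [hyx, eq_self_iff_true, if_true]
        rw [hax, hM x, ← Finset.sum_neg_distrib]
        exact Finset.sum_congr rfl fun z _ => by rw [neg_smul]
      · simp only [if_neg hyx]
        by_cases h0 : cartan u x y = 0
        · simp only [if_pos h0]
          exact ((hiy y hyx).1 h0).1.trans (hM y)
        · simp only [if_neg h0]
          rw [((hiy y hyx).2 h0).1, hM y, hM x, Finset.smul_sum, ← Finset.sum_add_distrib]
          exact Finset.sum_congr rfl fun z _ => by rw [smul_smul, ← add_smul]
    · intro y
      by_cases hyx : y = x
      · simp only [hyx, eq_self_iff_true, if_true]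
        rw [hax', hM' x, ← Finset.sum_neg_distrib]
        refine Finset.sum_congr rfl fun z _ => ?_
        rw [← neg_smul]
        congr 1
        ring
      · simp only [if_neg hyx]
        by_cases h0 : cartan u x y = 0
        · simp only [if_pos h0]
          exact ((hiy' y hyx).1 ((hzero y).2 h0)).1.trans (hM' y)
        · simp only [if_neg h0]
          rw [((hiy' y hyx).2 (fun hh => h0 ((hzero y).1 hh))).1, hM' y, hM' x,
            Finset.smul_sum, ← Finset.sum_add_distrib]
          refine Finset.sum_congr rfl fun z _ => ?_
          rw [smul_smul, ← add_smul]
          congr 1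
          rw [hc, hc]
          field_simp [hD x, hD z, h0]
    · intro y
      by_cases hyx : y = x
      · simp only [hyx, eq_self_iff_true, if_true]
        rw [hbx, hN x, ← Finset.sum_neg_distrib]
        exact Finset.sum_congr rfl fun z _ => by rw [neg_smul]
      · simp only [if_neg hyx]
        by_cases h0 : cartan u x y = 0
        · simp only [if_pos h0]
          exact ((hiy y hyx).1 h0).2.1.trans (hN y)
        · simp only [if_neg h0]
          rw [((hiy y hyx).2 h0).2.1, hN y, hN x, ← Finset.sum_add_distrib]
          exact Finset.sum_congr rfl fun z _ => by rw [← add_smul]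
    · intro y
      by_cases hyx : y = x
      · simp only [hyx, eq_self_iff_true, if_true]
        rw [hbx', hN' x, ← Finset.sum_neg_distrib]
        exact Finset.sum_congr rfl fun z _ => by rw [neg_smul]
      · simp only [if_neg hyx]
        by_cases h0 : cartan u x y = 0
        · simp only [if_pos h0]
          exact ((hiy' y hyx).1 ((hzero y).2 h0)).2.1.trans (hN' y)
        · simp only [if_neg h0]
          rw [((hiy' y hyx).2 (fun hh => h0 ((hzero y).1 hh))).2.1, hN' y, hN' x,
            ← Finset.sum_add_distrib]
          exact Finset.sum_congr rfl fun z _ => by rw [← add_smul]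

theorem rel_path {D : X → ℂ} (hD : ∀ t, D t ≠ 0) {v₀ u₁ : RootDatum X H}
    {u u' w w' : RootDatum X H} {ms : List X} (hr : Rel D v₀ u₁ u u')
    (h : IsPath u ms w) (h' : IsPath u' ms w') : Rel D v₀ u₁ w w' := by
  induction h generalizing u' with
  | nil => cases h' with | nil => exact hr
  | cons hstep hrest ih =>
      cases h' with
      | cons hstep' hrest' => exact ih (rel_step hD hr hstep hstep') hrest'

theorem path_exists {D : X → ℂ} (hD : ∀ t, D t ≠ 0) {u u' w : RootDatum X H} {ms : List X}
    (hs : SameD D u u') (h : IsPath u ms w) : ∃ w', IsPath u' ms w' ∧ SameD D w w' := by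
  induction h generalizing u' with
  | nil => exact ⟨u', .nil u', hs⟩
  | cons hstep hrest ih =>
      obtain ⟨t', hstep'⟩ := step_exists hD hs hstep
      obtain ⟨w', hw', hsw⟩ := ih (sameD_step hD hs hstep hstep') 
      exact ⟨w', .cons hstep' hw', hsw⟩

theorem iso_path_exists {D : X → ℂ} (hD : ∀ t, D t ≠ 0) {u u' w : RootDatum X H}
    {ms : List X} (hs : SameD D u u') (h : IsIsoPath u ms w) :
    ∃ w', IsIsoPath u' ms w' ∧ SameD D w w' := by
  induction h generalizing u' with
  | nil => exact ⟨u', .nil u', hs⟩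
  | cons hstep hrest ih =>
      obtain ⟨t', hstep'⟩ := iso_step_exists hD hs hstep
      obtain ⟨w', hw', hsw⟩ := ih (sameD_step hD hs (Or.inr hstep) (Or.inr hstep'))
      exact ⟨w', .cons hstep' hw', hsw⟩

end Aux5
section Aux6

set_option linter.unusedSectionVars false

variable {X : Type*} [Fintype X] {H : Type*} [AddCommGroup H] [Module ℂ H]

theorem sameD_of_dequiv {u v : RootDatum X H} (h : DEquivTo u v) :
    ∃ D : X → ℂ, (∀ t, D t ≠ 0) ∧ SameD D v u := by
  obtain ⟨hp, D, hD, hc⟩ := h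
  exact ⟨D, hD, hc, hp⟩

theorem sameD_inv {D : X → ℂ} (hD : ∀ t, D t ≠ 0) {u u' : RootDatum X H}
    (h : SameD D u u') : SameD (fun t => (D t)⁻¹) u' u :=
  ⟨fun y z => by rw [h.1 y z, ← mul_assoc, inv_mul_cancel₀ (hD y), one_mul], h.2.symm⟩

theorem dequiv_of_rel {D : X → ℂ} (hD : ∀ t, D t ≠ 0) {v u₁ u₂ u₃ : RootDatum X H}
    (hrel : Rel D v u₁ u₂ u₃) (hde₂ : DEquivTo u₂ v) : DEquivTo u₃ v := by
  obtain ⟨hc3, hp3⟩ := hrel.1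
  obtain ⟨hp2, D₂, hD₂, hc2⟩ := hde₂
  exact ⟨hp3.trans hp2, fun y => D y * D₂ y,
    fun y => mul_ne_zero (hD y) (hD₂ y), fun y z => by rw [hc3, hc2]; ring⟩

end Aux6

/-- Auxiliary form of Statement 15. -/
theorem stmt15_aux {X : Type*} [Fintype X] {H : Type*} [AddCommGroup H] [Module ℂ H]
    [FiniteDimensional ℂ H] (v : RootDatum X H)
    (hadm : Admissible v) :
    (∀ u₁ ∈ SkD v, ∀ u₂ ∈ SkD v, ∃! u₃, StarRel v u₁ u₂ u₃) ∧
    (∀ u₁ ∈ SkD v, ∀ u₂ ∈ SkD v, ∀ u₃, StarRel v u₁ u₂ u₃ → u₃ ∈ SkD v) ∧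
    (∀ u ∈ SkD v, StarRel v v u u ∧ StarRel v u v u) ∧
    (∀ u₁ ∈ SkD v, ∀ u₂ ∈ SkD v, ∀ u₃ ∈ SkD v, ∀ w₁ w₂ w₃ : RootDatum X H,
      StarRel v u₂ u₃ w₁ → StarRel v u₁ w₁ w₂ → StarRel v u₁ u₂ w₃ →
      StarRel v w₃ u₃ w₂) ∧
    (∀ u ∈ SkD v, ∃ u' ∈ SkD v, StarRel v u u' v ∧ StarRel v u' u v) ∧
    (∀ u₁ ∈ SpD v, ∀ u₂ ∈ SpD v, ∀ u₃, StarRel v u₁ u₂ u₃ → u₃ ∈ SpD v) ∧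
    (∀ u ∈ SpD v, ∃ u' ∈ SpD v, StarRel v u u' v ∧ StarRel v u' u v) := by
  refine ⟨?_, ?_, ?_, ?_, ?_, ?_, ?_⟩
  · -- well-definedness
    intro u₁ hu₁ u₂ hu₂
    obtain ⟨D, hD, hs⟩ := sameD_of_dequiv hu₁.2
    obtain ⟨ms, hms⟩ := hu₂.1
    obtain ⟨u₃, hpath, -⟩ := path_exists hD hs hms
    refine ⟨u₃, ⟨ms, hms, hpath⟩, ?_⟩
    rintro t ⟨ls, hls, hls'⟩
    exact rel_unique (rel_path hD (rel_refl hD hs) hls hls')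
      (rel_path hD (rel_refl hD hs) hms hpath)
  · -- closure
    rintro u₁ ⟨⟨ms₀, hms₀⟩, hde₁⟩ u₂ ⟨-, hde₂⟩ u₃ ⟨ms, hms, hms'⟩
    obtain ⟨D, hD, hs⟩ := sameD_of_dequiv hde₁
    have hrel := rel_path hD (rel_refl hD hs) hms hms'
    exact ⟨⟨ms₀ ++ ms, isPath_append hms₀ hms'⟩, dequiv_of_rel hD hrel hde₂⟩
  · -- unit
    intro u hu
    obtain ⟨ms, hms⟩ := hu.1
    exact ⟨⟨ms, hms, hms⟩, ⟨[], .nil v, .nil u⟩⟩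
  · -- associativity
    intro u₁ hu₁ u₂ hu₂ u₃ hu₃ w₁ w₂ w₃ h23 h1w1 h12
    obtain ⟨D, hD, hs⟩ := sameD_of_dequiv hu₁.2
    obtain ⟨ms₁, hms₁v, hms₁u₂⟩ := h23
    obtain ⟨ms₂, hms₂v, hms₂u₁⟩ := h1w1
    obtain ⟨ms₃, hms₃v, hms₃u₁⟩ := h12
    have hrel23 : Rel D v u₁ u₂ w₃ := rel_path hD (rel_refl hD hs) hms₃v hms₃u₁
    obtain ⟨t, ht, -⟩ := path_exists hD hrel23.1 hms₁u₂
    have hrelw1t : Rel D v u₁ w₁ t := rel_path hD hrel23 hms₁u₂ ht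
    have hrelw1w2 : Rel D v u₁ w₁ w₂ := rel_path hD (rel_refl hD hs) hms₂v hms₂u₁
    have htw : t = w₂ := rel_unique hrelw1t hrelw1w2
    exact ⟨ms₁, hms₁v, htw ▸ ht⟩
  · -- inverses
    rintro u ⟨⟨ms, hms⟩, hde⟩
    obtain ⟨D, hD, hs⟩ := sameD_of_dequiv hde
    have hsinv : SameD (fun t => (D t)⁻¹) u v := sameD_inv hD hs
    have hDinv : ∀ t, (fun t => (D t)⁻¹) t ≠ 0 := fun t => inv_ne_zero (hD t)
    have hrev : IsPath u ms.reverse v := isPath_reverse hms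
    obtain ⟨u', hu', hs'⟩ := path_exists hDinv hsinv hrev
    have hback : IsPath u' ms v := by
      have := isPath_reverse hu'
      rwa [List.reverse_reverse] at this
    exact ⟨u', ⟨⟨ms.reverse, hu'⟩, hs'.2, fun t => (D t)⁻¹, hDinv, hs'.1⟩,
      ⟨ms.reverse, hu', hrev⟩, ⟨ms, hms, hback⟩⟩
  · -- SpD closure
    rintro u₁ ⟨⟨ls₁, hls₁⟩, hde₁⟩ u₂ ⟨⟨ls₂, hls₂⟩, hde₂⟩ u₃ ⟨ms, hms, hms'⟩
    obtain ⟨D, hD, hs⟩ := sameD_of_dequiv hde₁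
    have hrel : Rel D v u₁ u₂ u₃ := rel_path hD (rel_refl hD hs) hms hms'
    obtain ⟨t, ht, -⟩ := iso_path_exists hD hs hls₂
    have hrelt : Rel D v u₁ u₂ t :=
      rel_path hD (rel_refl hD hs) (isoPath_toPath hls₂) (isoPath_toPath ht)
    have htu : t = u₃ := rel_unique hrelt hrel
    exact ⟨⟨ls₁ ++ ls₂, isoPath_append hls₁ (htu ▸ ht)⟩, dequiv_of_rel hD hrel hde₂⟩
  · -- SpD inverses
    rintro u ⟨⟨ms, hms⟩, hde⟩
    obtain ⟨D, hD, hs⟩ := sameD_of_dequiv hde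
    have hsinv : SameD (fun t => (D t)⁻¹) u v := sameD_inv hD hs
    have hDinv : ∀ t, (fun t => (D t)⁻¹) t ≠ 0 := fun t => inv_ne_zero (hD t)
    have hrev : IsIsoPath u ms.reverse v := isoPath_reverse hms
    obtain ⟨u', hu', hs'⟩ := iso_path_exists hDinv hsinv hrev
    have hback : IsIsoPath u' ms v := by
      have := isoPath_reverse hu'
      rwa [List.reverse_reverse] at this
    exact ⟨u', ⟨⟨ms.reverse, hu'⟩, hs'.2, fun t => (D t)⁻¹, hDinv, hs'.1⟩,
      ⟨ms.reverse, isoPath_toPath hu', isoPath_toPath hrev⟩,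
      ⟨ms, isoPath_toPath hms, isoPath_toPath hback⟩⟩

/-- The operation `u₁ * u₂ := σ^{u₁}(u₂)` makes `Sk^D(v)` into a group with
unit `v`, and `Sp^D(v)` is a subgroup. (Stated via the graph `StarRel` of the operation:
well-definedness, closure, unit laws, associativity, inverses, and closure of `Sp^D(v)`.) -/
theorem stmt15 {X : Type*} [Fintype X] {H : Type*} [AddCommGroup H] [Module ℂ H]
    [FiniteDimensional ℂ H] (v : RootDatum X H)
    (hadm : Admissible v) :
    -- the operation is well defined on Sk^D(v) and closed
    (∀ u₁ ∈ SkD v, ∀ u₂ ∈ SkD v, ∃! u₃, StarRel v u₁ u₂ u₃) ∧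
    (∀ u₁ ∈ SkD v, ∀ u₂ ∈ SkD v, ∀ u₃, StarRel v u₁ u₂ u₃ → u₃ ∈ SkD v) ∧
    -- v is a two-sided unit
    (∀ u ∈ SkD v, StarRel v v u u ∧ StarRel v u v u) ∧
    -- associativity
    (∀ u₁ ∈ SkD v, ∀ u₂ ∈ SkD v, ∀ u₃ ∈ SkD v, ∀ w₁ w₂ w₃ : RootDatum X H,
      StarRel v u₂ u₃ w₁ → StarRel v u₁ w₁ w₂ → StarRel v u₁ u₂ w₃ →
      StarRel v w₃ u₃ w₂) ∧
    -- two-sided inverses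
    (∀ u ∈ SkD v, ∃ u' ∈ SkD v, StarRel v u u' v ∧ StarRel v u' u v) ∧
    -- Sp^D(v) is a subgroup
    (∀ u₁ ∈ SpD v, ∀ u₂ ∈ SpD v, ∀ u₃, StarRel v u₁ u₂ u₃ → u₃ ∈ SpD v) ∧
    (∀ u ∈ SpD v, ∃ u' ∈ SpD v, StarRel v u u' v ∧ StarRel v u' u v) := by
  exact stmt15_aux v hadm
end KMS
end
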